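/- arXiv:2512.18255 — 6 statements merged into one kernel-verified Lean document; each statement's English description precedes it below -/
import Mathlib

section
/- (Lower bound on convergence rate in L^p-Wasserstein distance.) Assume the standard Markov chain setup and the L-drift condition L(V,φ,Ψ), and additionally that 𝒳 is a metric space with distance d, that V : 𝒳 → [1,∞) is Lipschitz with Lipschitz constant L_V ∈ (0,∞), and that for some p ∈ [1,∞) both π and P^n(x,·) belong to 𝒫_p(𝒳) for all n ∈ ℕ and x ∈ 𝒳. Pick q ∈ (0,1) and a constant c_q ∈ (0,1) with c_q/L_q(r) ≤ π({V ≥ r}) for all r ≥ 1, where L_q(r) = r φ(1/r) Ψ(r/(1−q)²) D(r) for an increasing D : [1,∞) → [1,∞) tending to infinity. Set f_⋆(r) = (r/2)^p, let h : [1,∞) → [1,∞) be continuous with h/f_⋆ increasing and tending to infinity, and define g(r) = h(r/2)/f_⋆(r/2) for r ∈ [2,∞) and g(r) = (g(2) − 1)(r − 1) + 1 for r ∈ [1,2). Let a_g : [1,∞) → ℝ₊ be continuous with a_g(r) ≤ f_⋆(g^{-1}(r)) c_q / L_q(g^{-1}(r)) for all r ≥ 1, such that A_g(r) := r a_g(r)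 is increasing to infinity with inverse A_g^{-1}. Let v : 𝒳 × ℕ → [1,∞) be increasing in the second argument with P^n(h∘V)(x) ≤ v(x,n) for all x and n. Then (1/(2 L_V))·(a_g ∘ A_g^{-1} ∘ (2^p v))(x,n)^{1/p} ≤ 𝒲_p(P^n(x,·), π) for all x ∈ 𝒳 and all n ∈ ℕ \ {0}. -/
open MeasureTheory ProbabilityTheory Filter Set
open scoped ENNReal NNReal

noncomputable section

/-- A time-homogeneous Markov chain on a measurable space `𝒳`: a Markov transition
kernel `P` together with the path-space law `law x` of the chain started at `x`.
The field `law_markov` is the Markov property: for any event `C` depending only on the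
first `n+1` coordinates, `ℙ_x(C ∩ {X_{n+1} ∈ A}) = ∫_C P(X_n, A) dℙ_x`. -/
structure MarkovChain (𝒳 : Type*) [MeasurableSpace 𝒳] where
  P : ProbabilityTheory.Kernel 𝒳 𝒳
  isMarkov : IsMarkovKernel P
  law : 𝒳 → Measure (ℕ → 𝒳)
  law_prob : ∀ x, IsProbabilityMeasure (law x)
  law_meas : Measurable law
  law_start : ∀ x, law x {ω | ω 0 = x} = 1
  law_markov : ∀ (x : 𝒳) (n : ℕ) (C : Set (ℕ → 𝒳)) (A : Set 𝒳),
    MeasurableSet C → MeasurableSet A →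
    (∀ ω ω' : ℕ → 𝒳, (∀ i ≤ n, ω i = ω' i) → (ω ∈ C ↔ ω' ∈ C)) →
    law x (C ∩ {ω | ω (n + 1) ∈ A}) = ∫⁻ ω in C, P (ω n) A ∂(law x)

namespace MarkovChain

variable {𝒳 : Type*} [MeasurableSpace 𝒳]

/-- `mc.stepDist x n` is the law of `X_n` under `ℙ_x`, i.e. the `n`-step transition
probability `P^n(x, ·)`. -/
def stepDist (mc : MarkovChain 𝒳) (x : 𝒳) (n : ℕ) : Measure 𝒳 :=
  (mc.law x).map (fun ω => ω n)

end MarkovChain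

/-- First hitting time of the set `s` by the path `ω` (equal to `⊤` if `s` is never hit). -/
def hitTime {𝒳 : Type*} (s : Set 𝒳) (ω : ℕ → 𝒳) : ℕ∞ :=
  ⨅ (n : ℕ) (_ : ω n ∈ s), (n : ℕ∞)

/-- First return time to `B` after time `k` : `τ_B(k) = inf {n ≥ k : ω n ∈ B}`. -/
def returnTime {𝒳 : Type*} (B : Set 𝒳) (k : ℕ) (ω : ℕ → 𝒳) : ℕ∞ :=
  ⨅ (n : ℕ) (_ : k ≤ n ∧ ω n ∈ B), (n : ℕ∞)

/-- The set of paths along which `V` has `limsup_{n→∞} V(X_n) = ∞`. -/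
def nonConfined {𝒳 : Type*} (V : 𝒳 → ℝ) : Set (ℕ → 𝒳) :=
  {ω | ∀ M : ℝ, ∃ᶠ n in atTop, M < V (ω n)}

/-- The `f`-variation distance between two (finite) measures:
`‖μ - ν‖_f = sup { |∫ g dμ - ∫ g dν| : g measurable, |g| ≤ f }`. -/
def fVar {𝒳 : Type*} [MeasurableSpace 𝒳] (f : 𝒳 → ℝ) (μ ν : Measure 𝒳) : ℝ :=
  ⨆ g : {g : 𝒳 → ℝ // Measurable g ∧ ∀ x, |g x| ≤ f x},
    |(∫ x, (g : 𝒳 → ℝ) x ∂μ) - ∫ x, (g : 𝒳 → ℝ) x ∂ν|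

/-- The standard setup: ergodic Markov chain with invariant probability measure `π`;
the chain is Feller, positive Harris recurrent and converges to `π` in total variation
from every starting point (hence aperiodic and `π`-irreducible). -/
structure StdSetup {𝒳 : Type*} [TopologicalSpace 𝒳] [MeasurableSpace 𝒳]
    (mc : MarkovChain 𝒳) where
  π : Measure 𝒳
  π_prob : IsProbabilityMeasure π
  π_inv : π.bind (fun x => mc.P x) = π
  feller : ∀ (n : ℕ) (O : Set 𝒳), IsOpen O →
    LowerSemicontinuous fun x => (mc.stepDist x n O).toReal
  harris : ∀ (x : 𝒳) (A : Set 𝒳), MeasurableSet A → 0 < π A →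
    mc.law x {ω | ∃ᶠ n in atTop, ω n ∈ A} = 1
  ergodic_tv : ∀ x : 𝒳,
    Tendsto (fun n => fVar (fun _ => (1 : ℝ)) (mc.stepDist x n) π) atTop (nhds 0)

/-- The L-drift condition `L(V, φ, Ψ)` of the paper. -/
structure LDrift {𝒳 : Type*} [TopologicalSpace 𝒳] [MeasurableSpace 𝒳]
    (mc : MarkovChain 𝒳) (V : 𝒳 → ℝ) (φ : ℝ → ℝ) (Ψ : ℝ → ℝ) where
  V_one_le : ∀ x, 1 ≤ V x
  V_cont : Continuous V
  nonconf : ∀ x, mc.law x (nonConfined V) = 1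
  ℓ₀ : ℝ
  one_le_ℓ₀ : 1 ≤ ℓ₀
  φ_nonneg : ∀ r ∈ Set.Ioc (0 : ℝ) 1, 0 ≤ φ r
  φ_cont : ContinuousOn φ (Set.Ioc 0 1)
  rφ_anti : StrictAntiOn (fun r => r * φ (1 / r)) (Set.Ici (1 : ℝ))
  rφ_lim : Tendsto (fun r => r * φ (1 / r)) atTop (nhds 0)
  b : ℝ
  b_nonneg : 0 ≤ b
  drift : ∀ x, (∫ y, (V y)⁻¹ ∂(mc.P x)) - φ ((V x)⁻¹) ≤
    (V x)⁻¹ - (if V x ≤ ℓ₀ then b else 0)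
  Ψ_one_le : ∀ r, 1 ≤ r → 1 ≤ Ψ r
  Ψ_diff : DifferentiableOn ℝ Ψ (Set.Ici 1)
  Ψ_mono : StrictMonoOn Ψ (Set.Ici 1)
  Ψ_submul : ∃ C : ℝ, 0 < C ∧ ∀ r₁ r₂, 1 ≤ r₁ → 1 ≤ r₂ → Ψ (r₁ + r₂) ≤ C * Ψ r₁ * Ψ r₂
  Cconst : ℝ → ℝ → ℝ
  Cconst_mem : ∀ ℓ m, ℓ₀ < ℓ → 0 < m → Cconst ℓ m ∈ Set.Ioo (0 : ℝ) 1
  hit_lb : ∀ ℓ m, ℓ₀ < ℓ → 0 < m → ∀ r, ℓ + m < r → ∀ x, ℓ + m ≤ V x →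
    ENNReal.ofReal (Cconst ℓ m / Ψ r) ≤
      mc.law x {ω | hitTime {y | r < V y} ω < hitTime {y | V y < ℓ} ω}

/-- `G_h(r) = q (1-q) h(r) / (r φ(1/r))`. -/
def Gfun (q : ℝ) (φ h : ℝ → ℝ) (r : ℝ) : ℝ := q * (1 - q) * h r / (r * φ (1 / r))

/-- A function is locally integrable at infinity if it is integrable on `[l, ∞)`
for some `l ≥ 0`. -/
def L1locInfty (f : ℝ → ℝ) : Prop := ∃ l : ℝ, 0 ≤ l ∧ MeasureTheory.IntegrableOn f (Set.Ici l)

open scoped Classical in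
/-- The modulated sum `∑_{k=0}^{T(ω)} h(V(ω_k))` (with value in `ℝ≥0∞`, the sum being a
series when `T(ω) = ∞`). -/
def modSum {𝒳 : Type*} (h : ℝ → ℝ) (V : 𝒳 → ℝ) (T : (ℕ → 𝒳) → ℕ∞) (ω : ℕ → 𝒳) : ℝ≥0∞ :=
  ∑' n : ℕ, if (n : ℕ∞) ≤ T ω then ENNReal.ofReal (h (V (ω n))) else 0

/-- Convergence in distribution of a sequence of laws on `ℝ`: integrals of bounded
continuous functions converge. -/
def TendstoInDistribution (μs : ℕ → Measure ℝ) (ν : Measure ℝ) : Prop :=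
  ∀ f : BoundedContinuousFunction ℝ ℝ,
    Tendsto (fun n => ∫ z, f z ∂(μs n)) atTop (nhds (∫ z, f z ∂ν))

/-- The ergodic average `S_n(g)(ω) = (1/n) ∑_{k=0}^{n-1} g(ω_k)`. -/
def ergAvg {𝒳 : Type*} (g : 𝒳 → ℝ) (n : ℕ) (ω : ℕ → 𝒳) : ℝ :=
  (∑ k ∈ Finset.range n, g (ω k)) / n

/-- The CLT holds for the ergodic average `S_n(g)`: there is `σ² ∈ (0,∞)` with
`√n (S_n(g) − π(g)) → N(0,σ²)` in distribution for every starting state. -/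
def CLTholds {𝒳 : Type*} [MeasurableSpace 𝒳] (mc : MarkovChain 𝒳) (π : Measure 𝒳)
    (g : 𝒳 → ℝ) : Prop :=
  ∃ σ2 : NNReal, 0 < σ2 ∧ ∀ x : 𝒳,
    TendstoInDistribution
      (fun n => (mc.law x).map fun ω => Real.sqrt n * (ergAvg g n ω - ∫ y, g y ∂π))
      (gaussianReal 0 σ2)

end

/-- The `p`-th power Wasserstein functional: infimum over couplings `γ` of `μ` and `ν`
of `∫ d(x,y)^p dγ`. The `L^p`-Wasserstein distance is its `p`-th root. -/
noncomputable def wassersteinPow {𝒳 : Type*} [MeasurableSpace 𝒳] [PseudoMetricSpace 𝒳] (p : ℝ)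
    (μ ν : Measure 𝒳) : ℝ≥0∞ :=
  ⨅ (γ : Measure (𝒳 × 𝒳)) (_ : γ.map Prod.fst = μ) (_ : γ.map Prod.snd = ν),
    ∫⁻ z, ENNReal.ofReal (dist z.1 z.2 ^ p) ∂γ

/-- `μ ∈ 𝒫_p(𝒳)`: finite `p`-th moment of the distance to some point. -/
def HasFiniteMoment {𝒳 : Type*} [MeasurableSpace 𝒳] [PseudoMetricSpace 𝒳] (p : ℝ)
    (μ : Measure 𝒳) : Prop :=
  ∃ x₀ : 𝒳, ∫⁻ x, ENNReal.ofReal (dist x₀ x ^ p) ∂μ ≠ ⊤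


section AuxLemmas

private lemma aux_two_rpow {p : ℝ} (hp : 1 ≤ p) : 1 + p ≤ (2:ℝ) ^ p := by
  have h := one_add_mul_self_le_rpow_one_add (by norm_num : (-1:ℝ) ≤ 1) hp
  norm_num at h
  linarith

private lemma aux_clamp_bound {p τ : ℝ} (hp : 1 ≤ p) (hτ : 1 ≤ τ) :
    p * min 1 (max (τ - 1) 0) ≤ (1 - ((2:ℝ) ^ p)⁻¹) * τ ^ p := by
  have hp0 : (0:ℝ) < p := lt_of_lt_of_le one_pos hp
  have h2p : (0:ℝ) < (2:ℝ) ^ p := Real.rpow_pos_of_pos two_pos p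
  have h2p' : 1 + p ≤ (2:ℝ) ^ p := aux_two_rpow hp
  have hεinv : ((2:ℝ)^p)⁻¹ * (2:ℝ)^p = 1 := inv_mul_cancel₀ (ne_of_gt h2p)
  have hεnn : 0 ≤ 1 - ((2:ℝ)^p)⁻¹ := by
    have h1 : ((2:ℝ)^p)⁻¹ ≤ 1 := by
      rw [inv_le_one₀ h2p]; linarith
    linarith
  rcases le_total 2 τ with h2τ | h2τ
  · have hmin : min 1 (max (τ - 1) 0) = 1 :=
      min_eq_left (le_max_of_le_left (by linarith))
    rw [hmin, mul_one]
    have hτp : (2:ℝ)^p ≤ τ ^ p := Real.rpow_le_rpow (by norm_num) h2τ hp0.le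
    have e3 : (1 - ((2:ℝ)^p)⁻¹) * (2:ℝ)^p ≤ (1 - ((2:ℝ)^p)⁻¹) * τ^p :=
      mul_le_mul_of_nonneg_left hτp hεnn
    have e4 : (1 - ((2:ℝ)^p)⁻¹) * (2:ℝ)^p = (2:ℝ)^p - 1 := by
      rw [sub_mul, one_mul, hεinv]
    linarith
  · have hmin : min 1 (max (τ - 1) 0) = τ - 1 := by
      rw [max_eq_left (by linarith), min_eq_right (by linarith)]
    rw [hmin]
    have hB : 1 + p * (τ - 1) ≤ τ ^ p := by
      have hb := one_add_mul_self_le_rpow_one_add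
        (show (-1:ℝ) ≤ τ - 1 by linarith) hp
      have e : 1 + (τ - 1) = τ := by ring
      rwa [e] at hb
    have e1 : (1 - ((2:ℝ)^p)⁻¹) * (1 + p*(τ-1)) ≤ (1 - ((2:ℝ)^p)⁻¹) * τ^p :=
      mul_le_mul_of_nonneg_left hB hεnn
    have hw : p * (τ - 1) ≤ p := by nlinarith
    have e2 : ((2:ℝ)^p)⁻¹ * (p*(τ-1)) ≤ ((2:ℝ)^p)⁻¹ * p :=
      mul_le_mul_of_nonneg_left hw (inv_nonneg.mpr h2p.le)
    have e3 : ((2:ℝ)^p)⁻¹ * (1 + p) ≤ ((2:ℝ)^p)⁻¹ * (2:ℝ)^p :=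
      mul_le_mul_of_nonneg_left h2p' (inv_nonneg.mpr h2p.le)
    rw [hεinv] at e3
    nlinarith [e1, e2, e3]

private lemma aux_pow_sub {p A B : ℝ} (hp : 1 ≤ p) (hA0 : 0 ≤ A) (hA1 : A ≤ 1)
    (hB0 : 0 ≤ B) : A ^ p ≤ max (A - B) 0 ^ p + p * B := by
  have hp0 : (0:ℝ) < p := lt_of_lt_of_le one_pos hp
  have hmax0 : (0:ℝ) ≤ max (A-B) 0 := le_max_right _ _
  have hmaxp : (0:ℝ) ≤ max (A - B) 0 ^ p := Real.rpow_nonneg hmax0 p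
  rcases eq_or_lt_of_le hA0 with hA0' | hA0'
  · rw [← hA0', Real.zero_rpow (ne_of_gt hp0)]
    positivity
  rcases le_total A B with hAB | hBA
  · have h1 : A ^ p ≤ A := by
      calc A ^ p ≤ A ^ (1:ℝ) := Real.rpow_le_rpow_of_exponent_ge hA0' hA1 hp
      _ = A := Real.rpow_one A
    nlinarith
  · have hmax : max (A - B) 0 = A - B := max_eq_left (by linarith)
    rw [hmax]
    have hx : (-1:ℝ) ≤ (A - B)/A - 1 := by
      have h0 : 0 ≤ (A - B)/A := div_nonneg (by linarith) hA0'.le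
      linarith
    have hb := one_add_mul_self_le_rpow_one_add hx hp
    rw [show 1 + ((A - B)/A - 1) = (A-B)/A by ring] at hb
    have hAp : (0:ℝ) < A ^ p := Real.rpow_pos_of_pos hA0' p
    have h2 : A^p * (1 + p * ((A-B)/A - 1)) ≤ A^p * ((A-B)/A)^p :=
      mul_le_mul_of_nonneg_left hb hAp.le
    have h3 : A^p * ((A - B)/A)^p = (A - B)^p := by
      rw [← Real.mul_rpow hA0'.le (div_nonneg (by linarith) hA0'.le)]
      congr 1
      field_simp
    have h4 : A^p * (1 + p * ((A-B)/A - 1)) = A^p - p * B * A^(p-1) := by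
      rw [Real.rpow_sub hA0', Real.rpow_one]
      field_simp
      ring
    have h5 : A ^ (p-1) ≤ 1 := Real.rpow_le_one hA0 hA1 (by linarith)
    have h5' : (0:ℝ) ≤ A ^ (p-1) := Real.rpow_nonneg hA0 _
    have h6 : p * B * A^(p-1) ≤ p * B :=
      mul_le_of_le_one_right (mul_nonneg hp0.le hB0) h5
    nlinarith [h2, h3, h4]

private lemma aux_clamp_lip (x y : ℝ) :
    |min 1 (max x 0) - min 1 (max y 0)| ≤ |x - y| := by
  have h1 : |min 1 (max x 0) - min 1 (max y 0)| ≤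
      max |(1:ℝ) - 1| |max x 0 - max y 0| :=
    abs_min_sub_min_le_max 1 (max x 0) 1 (max y 0)
  have h2 : |max x 0 - max y 0| ≤ |x - y| := abs_max_sub_max_le_abs x y 0
  simp only [sub_self, abs_zero] at h1
  calc |min 1 (max x 0) - min 1 (max y 0)|
      ≤ max 0 |max x 0 - max y 0| := h1
  _ = |max x 0 - max y 0| := max_eq_right (abs_nonneg _)
  _ ≤ |x - y| := h2

end AuxLemmas

set_option maxHeartbeats 2000000

/-- **Theorem (lower bound on the convergence rate in the `L^p`-Wasserstein distance).**
Under the standard setup and the L-drift condition, on a metric space with `V` Lipschitz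
(constant `L_V`) and `π, P^n(x,·) ∈ 𝒫_p(𝒳)`: with `f⋆(r) = (r/2)^p`,
`g(r) = h(r/2)/f⋆(r/2)` for `r ≥ 2` (linearly interpolated on `[1,2)`), inverse `ginv`,
`a_g(r) ≤ f⋆(g⁻¹(r)) c_q/L_q(g⁻¹(r))` with `A_g(r) = r a_g(r)` increasing to infinity
with inverse `Ainv`, and `P^n(h∘V)(x) ≤ v(x,n)`: for all `x` and `n ≥ 1`,
`(1/(2L_V)) (a_g ∘ A_g⁻¹ ∘ 2^p v)(x,n)^{1/p} ≤ 𝒲_p(P^n(x,·), π)`. -/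
theorem wasserstein_convergence_lower_bound
    {𝒳 : Type*} [MetricSpace 𝒳] [LocallyCompactSpace 𝒳]
    [MeasurableSpace 𝒳] [BorelSpace 𝒳]
    (mc : MarkovChain 𝒳) (setup : StdSetup mc)
    (V : 𝒳 → ℝ) (φ Ψ : ℝ → ℝ) (ld : LDrift mc V φ Ψ)
    (p : ℝ) (hp : 1 ≤ p)
    (LV : ℝ) (hLV : 0 < LV) (hVLip : ∀ x y : 𝒳, |V x - V y| ≤ LV * dist x y)
    (hmomπ : HasFiniteMoment p setup.π)
    (hmomP : ∀ (x : 𝒳) (n : ℕ), HasFiniteMoment p (mc.stepDist x n))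
    (q : ℝ) (hq : q ∈ Set.Ioo (0 : ℝ) 1)
    (D : ℝ → ℝ) (D_one_le : ∀ r, 1 ≤ r → 1 ≤ D r)
    (D_mono : StrictMonoOn D (Set.Ici 1)) (D_tendsto : Tendsto D atTop atTop)
    (Lq : ℝ → ℝ) (hLq : ∀ r, Lq r = r * φ (1 / r) * Ψ (r / (1 - q) ^ 2) * D r)
    (cq : ℝ) (hcq : cq ∈ Set.Ioo (0 : ℝ) 1)
    (hcq_tail : ∀ r, 1 ≤ r → ENNReal.ofReal (cq / Lq r) ≤ setup.π {x | r ≤ V x})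
    (h : ℝ → ℝ) (h_one_le : ∀ r, 1 ≤ r → 1 ≤ h r) (h_cont : ContinuousOn h (Set.Ici 1))
    (hhf_mono : StrictMonoOn (fun r => h r / (r / 2) ^ p) (Set.Ici 1))
    (hhf_tendsto : Tendsto (fun r => h r / (r / 2) ^ p) atTop atTop)
    (g : ℝ → ℝ)
    (hg_ge2 : ∀ r, 2 ≤ r → g r = h (r / 2) / (r / 4) ^ p)
    (hg_lt2 : ∀ r, 1 ≤ r → r < 2 → g r = (g 2 - 1) * (r - 1) + 1)
    (ginv : ℝ → ℝ) (hginv_left : ∀ r, 1 ≤ r → ginv (g r) = r)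
    (hginv_right : ∀ t, 1 ≤ t → g (ginv t) = t ∧ 1 ≤ ginv t)
    (a : ℝ → ℝ) (ha_cont : ContinuousOn a (Set.Ici 1)) (ha_nonneg : ∀ r, 0 ≤ a r)
    (ha_le : ∀ r, 1 ≤ r → a r ≤ (ginv r / 2) ^ p * cq / Lq (ginv r))
    (hA_mono : StrictMonoOn (fun r => r * a r) (Set.Ici 1))
    (hA_tendsto : Tendsto (fun r => r * a r) atTop atTop)
    (Ainv : ℝ → ℝ) (hAinv_left : ∀ r, 1 ≤ r → Ainv (r * a r) = r)
    (hAinv_right : ∀ t, 1 * a 1 ≤ t → Ainv t * a (Ainv t) = t ∧ 1 ≤ Ainv t)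
    (v : 𝒳 → ℕ → ℝ) (hv_one_le : ∀ x n, 1 ≤ v x n) (hv_mono : ∀ x, Monotone (v x))
    (hv : ∀ (x : 𝒳) (n : ℕ),
      ∫⁻ y, ENNReal.ofReal (h (V y)) ∂(mc.stepDist x n) ≤ ENNReal.ofReal (v x n)) :
    ∀ (x : 𝒳) (n : ℕ), n ≠ 0 →
      ENNReal.ofReal ((a (Ainv ((2 : ℝ) ^ p * v x n))) ^ (1 / p) / (2 * LV)) ≤
        (wassersteinPow p (mc.stepDist x n) setup.π) ^ (1 / p) := by

  intro x n hn
  haveI hπP : IsProbabilityMeasure setup.π := setup.π_prob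
  haveI := mc.law_prob x
  haveI hμP : IsProbabilityMeasure (mc.stepDist x n) := by
    rw [MarkovChain.stepDist]
    exact Measure.isProbabilityMeasure_map (measurable_pi_apply n).aemeasurable
  have hp0 : (0:ℝ) < p := lt_of_lt_of_le one_pos hp
  have h2p_pos : (0:ℝ) < (2:ℝ) ^ p := Real.rpow_pos_of_pos two_pos p
  have h2p_big : 1 + p ≤ (2:ℝ) ^ p := aux_two_rpow hp
  have hVmeas : Measurable V := ld.V_cont.measurable
  have hV1 := ld.V_one_le
  have hhV : Continuous fun y => h (V y) :=
    h_cont.comp_continuous ld.V_cont fun y => Set.mem_Ici.mpr (hV1 y)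
  -- h is monotone on [1, ∞)
  have hmono : ∀ u₁ u₂ : ℝ, 1 ≤ u₁ → u₁ ≤ u₂ → h u₁ ≤ h u₂ := by
    intro u₁ u₂ h1 h12
    have hu₂ : (1:ℝ) ≤ u₂ := le_trans h1 h12
    have hpow1 : (0:ℝ) < (u₁/2) ^ p := Real.rpow_pos_of_pos (by linarith) p
    have hpow2 : (0:ℝ) < (u₂/2) ^ p := Real.rpow_pos_of_pos (by linarith) p
    have hratio : h u₁ / (u₁/2)^p ≤ h u₂ / (u₂/2)^p :=
      hhf_mono.monotoneOn (Set.mem_Ici.mpr h1) (Set.mem_Ici.mpr hu₂) h12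
    have hple : (u₁/2)^p ≤ (u₂/2)^p :=
      Real.rpow_le_rpow (by linarith) (by linarith) hp0.le
    have hr2nn : 0 ≤ h u₂ / (u₂/2)^p :=
      div_nonneg (le_trans zero_le_one (h_one_le _ hu₂)) hpow2.le
    calc h u₁ = h u₁ / (u₁/2)^p * (u₁/2)^p := by field_simp
    _ ≤ h u₂ / (u₂/2)^p * (u₂/2)^p := mul_le_mul hratio hple hpow1.le hr2nn
    _ = h u₂ := by field_simp
  -- tails of π are below one
  have tail_le_one : ∀ u : ℝ, 1 ≤ u → cq / Lq u ≤ 1 := by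
    intro u hu
    have h1 := hcq_tail u hu
    have h2 : setup.π {x | u ≤ V x} ≤ 1 := prob_le_one
    exact ENNReal.ofReal_le_one.mp (le_trans h1 h2)
  -- a 1 ≤ 1
  have hg1 : g 1 = 1 := by
    have := hg_lt2 1 le_rfl one_lt_two
    simpa using this
  have hginv1 : ginv 1 = 1 := by
    have := hginv_left 1 le_rfl
    rwa [hg1] at this
  have ha1 : a 1 ≤ 1 := by
    have h1 := ha_le 1 le_rfl
    rw [hginv1] at h1
    have hhalf : ((1:ℝ)/2) ^ p ≤ 1 :=
      Real.rpow_le_one (by norm_num) (by norm_num) hp0.le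
    have hhalf0 : (0:ℝ) ≤ ((1:ℝ)/2) ^ p := Real.rpow_nonneg (by norm_num) p
    have h2 : ((1:ℝ)/2) ^ p * cq / Lq 1 ≤ 1 := by
      rw [mul_div_assoc]
      nlinarith [tail_le_one 1 le_rfl]
    linarith
  -- the quantity w = 2^p * v x n and t = Ainv w
  set w : ℝ := (2:ℝ) ^ p * v x n with hw_def
  have hv1 : (1:ℝ) ≤ v x n := hv_one_le x n
  have hw2 : (2:ℝ) ≤ w := by
    rw [hw_def]; nlinarith
  have hw_ge : 1 * a 1 ≤ w := by rw [one_mul]; linarith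
  obtain ⟨htat, ht1⟩ := hAinv_right w hw_ge
  set t : ℝ := Ainv w with ht_def
  have hat0 : 0 ≤ a t := ha_nonneg t
  obtain ⟨hgr, hr1⟩ := hginv_right t ht1
  set r : ℝ := ginv t with hr_def
  have hatle : a t ≤ (r/2) ^ p * cq / Lq r := ha_le t ht1
  rcases lt_or_ge r 2 with hr2 | hr2
  · -- degenerate case r < 2 : contradiction
    exfalso
    have hg2 : g 2 = h 1 * (2:ℝ)^p := by
      have e := hg_ge2 2 le_rfl
      norm_num at e
      rw [e, Real.div_rpow (by norm_num) (by norm_num), Real.one_rpow, div_div_eq_mul_div, div_one]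
    have hh1 : (1:ℝ) ≤ h 1 := h_one_le 1 le_rfl
    have hg2_ge : (1:ℝ) ≤ g 2 := by nlinarith
    have ht_le : t ≤ g 2 := by
      rw [← hgr, hg_lt2 r hr1 hr2]
      nlinarith
    have hh1v : h 1 ≤ v x n := by
      have hlow : ENNReal.ofReal (h 1) ≤
          ∫⁻ y, ENNReal.ofReal (h (V y)) ∂(mc.stepDist x n) := by
        calc ENNReal.ofReal (h 1)
            = ∫⁻ _, ENNReal.ofReal (h 1) ∂(mc.stepDist x n) := by
              rw [lintegral_const, measure_univ, mul_one]
        _ ≤ _ := lintegral_mono fun y =>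
              ENNReal.ofReal_le_ofReal (hmono 1 (V y) le_rfl (hV1 y))
      exact (ENNReal.ofReal_le_ofReal_iff (by linarith)).mp (le_trans hlow (hv x n))
    have hat1 : (1:ℝ) ≤ a t := by
      have h2 : t * a t ≤ (h 1 * (2:ℝ)^p) * a t := by
        apply mul_le_mul_of_nonneg_right _ hat0
        rw [← hg2]; exact ht_le
      rw [htat, hw_def] at h2
      nlinarith
    have hcq1 : cq / Lq r ≤ 1 := tail_le_one r hr1
    have hp1 : (r/2:ℝ)^p < 1 :=
      Real.rpow_lt_one (by linarith) (by linarith) hp0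
    have hnn : (0:ℝ) ≤ (r/2)^p := Real.rpow_nonneg (by linarith) p
    have hfin : a t < 1 := by
      have : a t ≤ (r/2)^p * (cq/Lq r) := by rw [← mul_div_assoc]; exact hatle
      nlinarith
    linarith
  · -- main case : 2 ≤ r
    have hr0 : (0:ℝ) < r := by linarith
    have hr2' : (1:ℝ) ≤ r/2 := by linarith
    have hr4 : (0:ℝ) < r/4 := by linarith
    have hHr1 : (1:ℝ) ≤ h (r/2) := h_one_le _ hr2'
    have hHr0 : (0:ℝ) < h (r/2) := by linarith
    have hr4p : (0:ℝ) < (r/4) ^ p := Real.rpow_pos_of_pos hr4 p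
    have hr2p : (0:ℝ) < (r/2) ^ p := Real.rpow_pos_of_pos (by linarith) p
    have ht0 : (0:ℝ) < t := by linarith
    have hHr_eq : h (r/2) = t * (r/4) ^ p := by
      have e : h (r/2) / (r/4) ^ p = t := by rw [← hg_ge2 r hr2]; exact hgr
      field_simp at e
      linarith
    have hrp_split : (r/2:ℝ)^p = (2:ℝ)^p * (r/4)^p := by
      rw [show (r/2:ℝ) = 2*(r/4) by ring, Real.mul_rpow (by norm_num) hr4.le]
    have hs_eq : v x n / h (r/2) = a t / (r/2) ^ p := by
      have htw : t * a t = (2:ℝ)^p * v x n := by rw [htat, hw_def]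
      rw [hHr_eq, hrp_split, div_eq_div_iff (mul_pos ht0 hr4p).ne' (mul_pos h2p_pos hr4p).ne']
      linear_combination (-((r:ℝ)/4)^p) * htw
    set s : ℝ := a t / (r/2) ^ p with hs_def
    have hs0 : 0 ≤ s := div_nonneg hat0 hr2p.le
    have hsC : s ≤ cq / Lq r := by
      rw [hs_def, div_le_iff₀ hr2p]
      calc a t ≤ (r/2)^p * cq / Lq r := hatle
      _ = cq / Lq r * (r/2)^p := by ring
    set ε : ℝ := ((2:ℝ)^p)⁻¹ with hε_def
    have hε0 : 0 < ε := inv_pos.mpr h2p_pos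
    have hε1 : ε ≤ 1 := by
      rw [hε_def, inv_le_one₀ h2p_pos]; linarith
    -- the clamp test function
    set G : 𝒳 → ℝ := fun u => min 1 (max (2 * V u / r - 1) 0) with hG_def
    have hG0 : ∀ u, 0 ≤ G u := fun u => le_min zero_le_one (le_max_right _ _)
    have hG1 : ∀ u, G u ≤ 1 := fun u => min_le_left _ _
    have hGmeas : Measurable G := by
      apply Measurable.min measurable_const
      apply Measurable.max _ measurable_const
      exact ((hVmeas.const_mul 2).div_const r).sub measurable_const
    have hGone : ∀ u, r ≤ V u → G u = 1 := by
      intro u hu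
      have h1 : (1:ℝ) ≤ 2 * V u / r - 1 := by
        rw [le_sub_iff_add_le, le_div_iff₀ hr0]; nlinarith
      simp only [hG_def]
      rw [max_eq_left (by linarith), min_eq_left h1]
    -- pointwise Chebyshev-type bound
    have hKEY3 : ∀ u, p * G u ≤ (1 - ε) / h (r/2) * h (V u) := by
      intro u
      have hhu1 : (1:ℝ) ≤ h (V u) := h_one_le _ (hV1 u)
      have hcnn : 0 ≤ (1 - ε) / h (r/2) := div_nonneg (by linarith) hHr0.le
      rcases lt_or_ge (V u) (r/2) with hcase | hcase
      · have hzero : G u = 0 := by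
          have h1 : 2 * V u / r - 1 ≤ 0 := by
            rw [sub_nonpos, div_le_one hr0]; linarith
          simp only [hG_def]
          rw [max_eq_right h1, min_eq_right zero_le_one]
        rw [hzero, mul_zero]
        positivity
      · have hτ1 : 1 ≤ 2 * V u / r := by
          rw [le_div_iff₀ hr0]; linarith
        have hVu0 : (0:ℝ) < V u := by linarith
        have hVu2p : (0:ℝ) < (V u/2)^p := Real.rpow_pos_of_pos (by linarith) p
        have hhu : h (r/2) * (2 * V u / r) ^ p ≤ h (V u) := by
          have hratio : h (r/2) / (r/4)^p ≤ h (V u) / (V u/2)^p := by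
            have hr' := hhf_mono.monotoneOn (Set.mem_Ici.mpr hr2')
              (Set.mem_Ici.mpr (le_trans hr2' hcase)) hcase
            rw [show (r/2/2:ℝ) = r/4 by ring] at hr'
            exact hr'
          have hτp_eq : (2 * V u / r) ^ p = (V u / 2)^p / (r/4)^p := by
            rw [← Real.div_rpow (by linarith) hr4.le]
            congr 1
            field_simp
            ring
          rw [hτp_eq, ← mul_div_assoc, div_le_iff₀ hr4p]
          rw [div_le_div_iff₀ hr4p hVu2p] at hratio
          linarith
        have hL2 := aux_clamp_bound hp hτ1
        calc p * G u = p * min 1 (max (2 * V u / r - 1) 0) := by rw [hG_def]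
        _ ≤ (1 - ε) * (2 * V u / r) ^ p := by rw [hε_def] at *; exact hL2
        _ ≤ (1 - ε) / h (r/2) * h (V u) := by
            rw [div_mul_eq_mul_div, le_div_iff₀ hHr0]
            calc (1 - ε) * (2 * V u / r) ^ p * h (r/2)
                = (1 - ε) * (h (r/2) * (2 * V u / r) ^ p) := by ring
            _ ≤ (1 - ε) * h (V u) := mul_le_mul_of_nonneg_left hhu (by linarith)
    -- pointwise Lipschitz bound
    have hKEY1 : ∀ z : 𝒳 × 𝒳, max (G z.2 - G z.1) 0 ≤ 2 * LV / r * dist z.1 z.2 := by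
      intro z
      have hd0 : 0 ≤ 2 * LV / r * dist z.1 z.2 := by positivity
      refine max_le ?_ hd0
      have h1 : |G z.2 - G z.1| ≤ |(2 * V z.2 / r - 1) - (2 * V z.1 / r - 1)| :=
        aux_clamp_lip _ _
      have h2 : |(2 * V z.2 / r - 1) - (2 * V z.1 / r - 1)| = 2/r * |V z.2 - V z.1| := by
        rw [← abs_of_nonneg (show (0:ℝ) ≤ 2/r by positivity), ← abs_mul]
        congr 1
        field_simp
        ring
      have h3 : |V z.2 - V z.1| ≤ LV * dist z.1 z.2 := by
        rw [abs_sub_comm]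
        exact hVLip z.1 z.2
      calc G z.2 - G z.1 ≤ |G z.2 - G z.1| := le_abs_self _
      _ ≤ 2/r * |V z.2 - V z.1| := by rw [← h2]; exact h1
      _ ≤ 2/r * (LV * dist z.1 z.2) :=
          mul_le_mul_of_nonneg_left h3 (by positivity)
      _ = 2 * LV / r * dist z.1 z.2 := by ring
    -- the main Wasserstein lower bound
    set M : ℝ := r / (2 * LV) with hM_def
    have hM0 : 0 < M := by rw [hM_def]; positivity
    have hMp : (0:ℝ) < M ^ p := Real.rpow_pos_of_pos hM0 p
    have hWlow : ENNReal.ofReal (a t / (2*LV)^p) ≤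
        wassersteinPow p (mc.stepDist x n) setup.π := by
      rw [wassersteinPow]
      refine le_iInf fun γ => le_iInf fun hγ1 => le_iInf fun hγ2 => ?_
      have hrpmeas : Measurable fun y : ℝ => y ^ p :=
        (continuous_id.rpow_const fun _ => Or.inr hp0.le).measurable
      have hmeasG2 : Measurable fun z : 𝒳 × 𝒳 => ENNReal.ofReal (G z.2 ^ p) :=
        (hrpmeas.comp (hGmeas.comp measurable_snd)).ennreal_ofReal
      have hmeas_f1 : Measurable fun z : 𝒳 × 𝒳 =>
          ENNReal.ofReal (max (G z.2 - G z.1) 0 ^ p) := by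
        apply Measurable.ennreal_ofReal
        apply hrpmeas.comp
        exact ((hGmeas.comp measurable_snd).sub (hGmeas.comp measurable_fst)).max
          measurable_const
      set I := ∫⁻ z, ENNReal.ofReal (dist z.1 z.2 ^ p) ∂γ with hI_def
      have step1 : ENNReal.ofReal s ≤ γ {z : 𝒳 × 𝒳 | r ≤ V z.2} := by
        have e : γ {z : 𝒳 × 𝒳 | r ≤ V z.2} = setup.π {x | r ≤ V x} := by
          rw [← hγ2, Measure.map_apply measurable_snd
            (measurableSet_le measurable_const hVmeas)]
          rfl
        rw [e]
        exact le_trans (ENNReal.ofReal_le_ofReal hsC) (hcq_tail r (by linarith))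
      have step2 : γ {z : 𝒳 × 𝒳 | r ≤ V z.2} ≤
          ∫⁻ z, ENNReal.ofReal (G z.2 ^ p) ∂γ := by
        rw [← setLIntegral_one]
        refine le_trans (setLIntegral_mono hmeasG2 ?_) (setLIntegral_le_lintegral _ _)
        intro z hz
        rw [hGone _ hz, Real.one_rpow]
        simp
      have step3 : ∫⁻ z, ENNReal.ofReal (G z.2 ^ p) ∂γ ≤
          (∫⁻ z, ENNReal.ofReal (max (G z.2 - G z.1) 0 ^ p) ∂γ) +
            ∫⁻ z, ENNReal.ofReal (p * G z.1) ∂γ := by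
        rw [← lintegral_add_left hmeas_f1]
        refine lintegral_mono fun z => ?_
        calc ENNReal.ofReal (G z.2 ^ p)
            ≤ ENNReal.ofReal (max (G z.2 - G z.1) 0 ^ p + p * G z.1) :=
              ENNReal.ofReal_le_ofReal (aux_pow_sub hp (hG0 _) (hG1 _) (hG0 _))
        _ ≤ _ := ENNReal.ofReal_add_le
      have step4 : ∫⁻ z, ENNReal.ofReal (max (G z.2 - G z.1) 0 ^ p) ∂γ ≤
          ENNReal.ofReal ((M^p)⁻¹) * I := by
        rw [hI_def, ← lintegral_const_mul' _ _ ENNReal.ofReal_ne_top]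
        refine lintegral_mono fun z => ?_
        rw [← ENNReal.ofReal_mul (by positivity)]
        apply ENNReal.ofReal_le_ofReal
        have h1 : max (G z.2 - G z.1) 0 ≤ dist z.1 z.2 / M := by
          calc max (G z.2 - G z.1) 0 ≤ 2*LV/r * dist z.1 z.2 := hKEY1 z
          _ = dist z.1 z.2 / M := by
              rw [hM_def]
              field_simp
        calc max (G z.2 - G z.1) 0 ^ p ≤ (dist z.1 z.2 / M) ^ p :=
          Real.rpow_le_rpow (le_max_right _ _) h1 hp0.le
        _ = (M^p)⁻¹ * dist z.1 z.2 ^ p := by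
          rw [Real.div_rpow dist_nonneg hM0.le]
          ring
      have step5 : ∫⁻ z, ENNReal.ofReal (p * G z.1) ∂γ ≤
          ENNReal.ofReal ((1-ε) * s) := by
        have e : ∫⁻ z, ENNReal.ofReal (p * G z.1) ∂γ
            = ∫⁻ y, ENNReal.ofReal (p * G y) ∂(mc.stepDist x n) := by
          rw [← hγ1, lintegral_map ((hGmeas.const_mul p).ennreal_ofReal) measurable_fst]
        rw [e]
        have hcnn : 0 ≤ (1 - ε) / h (r/2) := div_nonneg (by linarith) hHr0.le
        calc ∫⁻ y, ENNReal.ofReal (p * G y) ∂(mc.stepDist x n)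
            ≤ ∫⁻ y, ENNReal.ofReal ((1-ε)/h (r/2)) * ENNReal.ofReal (h (V y))
                ∂(mc.stepDist x n) := by
              refine lintegral_mono fun y => ?_
              rw [← ENNReal.ofReal_mul hcnn]
              exact ENNReal.ofReal_le_ofReal (hKEY3 y)
        _ = ENNReal.ofReal ((1-ε)/h (r/2)) *
              ∫⁻ y, ENNReal.ofReal (h (V y)) ∂(mc.stepDist x n) :=
              lintegral_const_mul _ (hhV.measurable.ennreal_ofReal)
        _ ≤ ENNReal.ofReal ((1-ε)/h (r/2)) * ENNReal.ofReal (v x n) :=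
              mul_le_mul_right (hv x n) _
        _ = ENNReal.ofReal ((1-ε)/h (r/2) * v x n) := (ENNReal.ofReal_mul hcnn).symm
        _ = ENNReal.ofReal ((1-ε) * s) := by
              congr 1
              rw [div_mul_eq_mul_div, mul_div_assoc, hs_eq]
      have hcomb : ENNReal.ofReal s ≤
          ENNReal.ofReal ((M^p)⁻¹) * I + ENNReal.ofReal ((1-ε)*s) :=
        step1.trans (step2.trans (step3.trans (add_le_add step4 step5)))
      have hsub : ENNReal.ofReal (ε * s) ≤ ENNReal.ofReal ((M^p)⁻¹) * I := by
        have h1 : ENNReal.ofReal s - ENNReal.ofReal ((1-ε)*s) ≤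
            ENNReal.ofReal ((M^p)⁻¹) * I := tsub_le_iff_right.mpr hcomb
        rwa [← ENNReal.ofReal_sub _ (by nlinarith),
          show s - (1-ε)*s = ε * s by ring] at h1
      have hfin : ENNReal.ofReal (M^p * (ε * s)) ≤ I := by
        calc ENNReal.ofReal (M^p * (ε*s))
            = ENNReal.ofReal (M^p) * ENNReal.ofReal (ε*s) := ENNReal.ofReal_mul hMp.le
        _ ≤ ENNReal.ofReal (M^p) * (ENNReal.ofReal ((M^p)⁻¹) * I) :=
            mul_le_mul_right hsub _
        _ = (ENNReal.ofReal (M^p) * ENNReal.ofReal ((M^p)⁻¹)) * I := (mul_assoc _ _ _).symm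
        _ = I := by
            rw [← ENNReal.ofReal_mul hMp.le, mul_inv_cancel₀ (ne_of_gt hMp)]
            simp
      have hident : M ^ p * (ε * s) = a t / (2*LV)^p := by
        rw [hM_def, hs_def, hε_def]
        have e1 : (r / (2*LV)) ^ p = r^p / (2*LV)^p :=
          Real.div_rpow hr0.le (show (0:ℝ) ≤ 2*LV by positivity) p
        have e2 : (r/2:ℝ)^p = r^p / 2^p :=
          Real.div_rpow hr0.le (show (0:ℝ) ≤ 2 by norm_num) p
        have hrppos : (0:ℝ) < r ^ p := Real.rpow_pos_of_pos hr0 p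
        have h2LVp : (0:ℝ) < ((2:ℝ)*LV) ^ p := Real.rpow_pos_of_pos (by positivity) p
        rw [e1, e2]
        field_simp
      rw [← hident]
      exact hfin
    -- conclude by taking p-th roots
    have hfinal := ENNReal.rpow_le_rpow hWlow
      (le_of_lt (by positivity : (0:ℝ) < 1/p))
    rw [ENNReal.ofReal_rpow_of_nonneg (by positivity) (by positivity)] at hfinal
    have e2 : (a t / (2*LV)^p) ^ (1/p) = a t ^ (1/p) / (2*LV) := by
      rw [Real.div_rpow hat0 (Real.rpow_nonneg (by positivity) p)]
      congr 1
      rw [← Real.rpow_mul (by positivity : (0:ℝ) ≤ 2*LV),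
        mul_one_div_cancel (ne_of_gt hp0), Real.rpow_one]
    rw [e2] at hfinal
    exact hfinal
end

section
/- (Non-confinement.) Let X = (X_n)_{n∈ℕ} be a Markov chain with transition kernel P on a measurable space (𝒳, ℬ(𝒳)) and let V : 𝒳 → [1,∞) be measurable. If for every u ≥ 1 there exists n₀ ∈ ℕ such that inf_{x ∈ 𝒳} P^{n₀}(x, {V ≥ u}) > 0, then the non-confinement property holds: ℙ_x( limsup_{n→∞} V(X_n) = ∞ ) = 1 for every x ∈ 𝒳. -/
open MeasureTheory ProbabilityTheory Filter Set
open scoped ENNReal NNReal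

section AuxNonconfinement

namespace MarkovChain

variable {𝒳 : Type*} [MeasurableSpace 𝒳]

lemma stepDist_isProb (mc : MarkovChain 𝒳) (y : 𝒳) (n : ℕ) :
    IsProbabilityMeasure (mc.stepDist y n) := by
  have := mc.law_prob y
  exact Measure.isProbabilityMeasure_map (measurable_pi_apply n).aemeasurable

lemma law_eval_zero {β : Type*} [MeasurableSpace β] [MeasurableSingletonClass β]
    (mc : MarkovChain 𝒳) (y : 𝒳) (g : 𝒳 → β) (hg : Measurable g) :
    mc.law y {ω | g (ω 0) = g y} = 1 := by
  have hprob := mc.law_prob y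
  refine le_antisymm prob_le_one ?_
  rw [← mc.law_start y]
  refine measure_mono fun ω hω => ?_
  simp only [Set.mem_setOf_eq] at hω ⊢
  rw [hω]

lemma lintegral_eval_zero (mc : MarkovChain 𝒳) (y : 𝒳) (g : 𝒳 → ℝ≥0∞)
    (hg : Measurable g) :
    ∫⁻ ω, g (ω 0) ∂(mc.law y) = g y := by
  have hprob := mc.law_prob y
  have hT : MeasurableSet {ω : ℕ → 𝒳 | g (ω 0) = g y} :=
    (hg.comp (measurable_pi_apply 0)) (measurableSet_singleton (g y))
  have h1 := mc.law_eval_zero y g hg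
  have hae : (fun ω : ℕ → 𝒳 => g (ω 0)) =ᵐ[mc.law y] fun _ => g y := by
    rw [Filter.EventuallyEq, ae_iff]
    have h2 : {ω : ℕ → 𝒳 | ¬ g (ω 0) = g y} = {ω : ℕ → 𝒳 | g (ω 0) = g y}ᶜ := rfl
    rw [h2, measure_compl hT (measure_ne_top _ _), h1, measure_univ, tsub_self]
  rw [lintegral_congr_ae hae, lintegral_const, measure_univ, mul_one]

lemma stepDist_one (mc : MarkovChain 𝒳) (y : 𝒳) (A : Set 𝒳) (hA : MeasurableSet A) :
    mc.stepDist y 1 A = mc.P y A := by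
  have h := mc.law_markov y 0 Set.univ A MeasurableSet.univ hA (fun _ _ _ => Iff.rfl)
  rw [Set.univ_inter, Measure.restrict_univ] at h
  rw [MarkovChain.stepDist, Measure.map_apply (measurable_pi_apply 1) hA]
  have h2 : (fun ω : ℕ → 𝒳 => ω 1) ⁻¹' A = {ω : ℕ → 𝒳 | ω (0 + 1) ∈ A} := rfl
  rw [h2, h]
  exact mc.lintegral_eval_zero y _ (mc.P.measurable_coe hA)

lemma stepDist_succ (mc : MarkovChain 𝒳) (y : 𝒳) (k : ℕ) (A : Set 𝒳)
    (hA : MeasurableSet A) :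
    mc.stepDist y (k + 1) A = ∫⁻ z, mc.P z A ∂(mc.stepDist y k) := by
  have h := mc.law_markov y k Set.univ A MeasurableSet.univ hA (fun _ _ _ => Iff.rfl)
  rw [Set.univ_inter, Measure.restrict_univ] at h
  rw [MarkovChain.stepDist, Measure.map_apply (measurable_pi_apply (k + 1)) hA]
  have h2 : (fun ω : ℕ → 𝒳 => ω (k + 1)) ⁻¹' A = {ω : ℕ → 𝒳 | ω (k + 1) ∈ A} := rfl
  rw [h2, h, MarkovChain.stepDist,
    lintegral_map (mc.P.measurable_coe hA) (measurable_pi_apply k)]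

lemma multistep (mc : MarkovChain 𝒳) (x : 𝒳) (n : ℕ) (C : Set (ℕ → 𝒳))
    (hC : MeasurableSet C)
    (hCdep : ∀ ω ω' : ℕ → 𝒳, (∀ i ≤ n, ω i = ω' i) → (ω ∈ C ↔ ω' ∈ C)) :
    ∀ (k : ℕ) (A : Set 𝒳), MeasurableSet A →
      mc.law x (C ∩ {ω | ω (n + (k + 1)) ∈ A}) =
        ∫⁻ ω in C, mc.stepDist (ω n) (k + 1) A ∂(mc.law x) := by
  intro k
  induction k with
  | zero =>
    intro A hA
    have h : mc.law x (C ∩ {ω | ω (n + (0 + 1)) ∈ A})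
        = ∫⁻ ω in C, mc.P (ω n) A ∂(mc.law x) := mc.law_markov x n C A hC hA hCdep
    rw [h]
    refine lintegral_congr fun ω => ?_
    exact (mc.stepDist_one (ω n) A hA).symm
  | succ k ih =>
    intro A hA
    have hdep' : ∀ ω ω' : ℕ → 𝒳, (∀ i ≤ n + (k + 1), ω i = ω' i) → (ω ∈ C ↔ ω' ∈ C) :=
      fun ω ω' h => hCdep ω ω' fun i hi => h i (le_trans hi (Nat.le_add_right n (k + 1)))
    have h : mc.law x (C ∩ {ω | ω (n + (k + 1 + 1)) ∈ A})
        = ∫⁻ ω in C, mc.P (ω (n + (k + 1))) A ∂(mc.law x) :=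
      mc.law_markov x (n + (k + 1)) C A hC hA hdep'
    have hker : Measurable fun z : 𝒳 => mc.stepDist z (k + 1) :=
      (Measure.measurable_map (fun ω : ℕ → 𝒳 => ω (k + 1))
        (measurable_pi_apply (k + 1))).comp mc.law_meas
    have hmeq : ((mc.law x).restrict C).map (fun ω => ω (n + (k + 1)))
        = (((mc.law x).restrict C).map (fun ω => ω n)).bind
            (fun z => mc.stepDist z (k + 1)) := by
      ext B hB
      rw [Measure.map_apply (measurable_pi_apply _) hB, Measure.bind_apply hB hker.aemeasurable]
      have hg : Measurable fun z : 𝒳 => mc.stepDist z (k + 1) B :=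
        (Measure.measurable_coe hB).comp hker
      rw [lintegral_map hg (measurable_pi_apply n),
        Measure.restrict_apply ((measurable_pi_apply _) hB), Set.inter_comm]
      exact ih B hB
    have hker2 : Measurable fun z : 𝒳 => mc.stepDist z (k + 1 + 1) :=
      (Measure.measurable_map (fun ω : ℕ → 𝒳 => ω (k + 1 + 1))
        (measurable_pi_apply (k + 1 + 1))).comp mc.law_meas
    calc mc.law x (C ∩ {ω | ω (n + (k + 1 + 1)) ∈ A})
        = ∫⁻ ω in C, mc.P (ω (n + (k + 1))) A ∂(mc.law x) := h
      _ = ∫⁻ z, mc.P z A ∂(((mc.law x).restrict C).map (fun ω => ω (n + (k + 1)))) := by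
          rw [lintegral_map (mc.P.measurable_coe hA) (measurable_pi_apply _)]
      _ = ∫⁻ z, mc.P z A ∂((((mc.law x).restrict C).map (fun ω => ω n)).bind
            (fun z => mc.stepDist z (k + 1))) := by rw [hmeq]
      _ = ∫⁻ y, ∫⁻ z, mc.P z A ∂(mc.stepDist y (k + 1))
            ∂(((mc.law x).restrict C).map (fun ω => ω n)) :=
          Measure.lintegral_bind hker.aemeasurable (mc.P.measurable_coe hA).aemeasurable
      _ = ∫⁻ y, mc.stepDist y (k + 1 + 1) A
            ∂(((mc.law x).restrict C).map (fun ω => ω n)) :=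
          lintegral_congr fun y => (mc.stepDist_succ y (k + 1) A hA).symm
      _ = ∫⁻ ω in C, mc.stepDist (ω n) (k + 1 + 1) A ∂(mc.law x) := by
          have hg2 : Measurable fun z : 𝒳 => mc.stepDist z (k + 1 + 1) A :=
            (Measure.measurable_coe hA).comp hker2
          rw [lintegral_map hg2 (measurable_pi_apply n)]

end MarkovChain

end AuxNonconfinement

/-- **Lemma (non-confinement).** If for every `u ≥ 1` there exists `n₀ ∈ ℕ` with
`inf_{x ∈ 𝒳} P^{n₀}(x, {V ≥ u}) > 0`, then
`ℙ_x(limsup_{n→∞} V(X_n) = ∞) = 1` for every `x ∈ 𝒳`. -/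
theorem nonconfinement_of_uniform_excursion
    {𝒳 : Type*} [MeasurableSpace 𝒳]
    (mc : MarkovChain 𝒳) (V : 𝒳 → ℝ) (V_meas : Measurable V)
    (hV : ∀ u : ℝ, 1 ≤ u → ∃ n₀ : ℕ,
      0 < ⨅ x : 𝒳, mc.stepDist x n₀ {y | u ≤ V y}) :
    ∀ x : 𝒳, mc.law x (nonConfined V) = 1 := by
  intro x
  have hxprob := mc.law_prob x
  have hSmeas : ∀ c : ℝ, MeasurableSet {ω : ℕ → 𝒳 | ∃ᶠ n in atTop, c < V (ω n)} := by
    intro c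
    have hset : {ω : ℕ → 𝒳 | ∃ᶠ n in atTop, c < V (ω n)}
        = ⋂ N : ℕ, ⋃ n : ℕ, ⋃ _ : N ≤ n, {ω : ℕ → 𝒳 | c < V (ω n)} := by
      ext ω
      simp [Filter.frequently_atTop]
    rw [hset]
    exact MeasurableSet.iInter fun N => MeasurableSet.iUnion fun n =>
      MeasurableSet.iUnion fun _ =>
        measurableSet_lt measurable_const (V_meas.comp (measurable_pi_apply n))
  have key : ∀ M : ℝ, mc.law x {ω : ℕ → 𝒳 | ∃ᶠ n in atTop, M < V (ω n)}ᶜ = 0 := by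
    intro M
    obtain ⟨n₀, hδ⟩ := hV (max (M + 1) 1) (le_max_right _ _)
    set u : ℝ := max (M + 1) 1 with hu
    have hMu : M < u := lt_of_lt_of_le (lt_add_one M) (le_max_left _ _)
    have hAmeas : MeasurableSet {z : 𝒳 | u ≤ V z} := measurableSet_le measurable_const V_meas
    rcases Nat.eq_zero_or_pos n₀ with h0 | hpos
    · subst h0
      have hall : ∀ y, u ≤ V y := by
        intro y
        by_contra hy
        push_neg at hy
        have hprob := mc.law_prob y
        have hT1 : mc.law y {ω | V (ω 0) = V y} = 1 := mc.law_eval_zero y V V_meas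
        have hTmeas : MeasurableSet {ω : ℕ → 𝒳 | V (ω 0) = V y} :=
          (V_meas.comp (measurable_pi_apply 0)) (measurableSet_singleton (V y))
        have hzero : mc.stepDist y 0 {z | u ≤ V z} = 0 := by
          rw [MarkovChain.stepDist, Measure.map_apply (measurable_pi_apply 0) hAmeas]
          have hsub : (fun ω : ℕ → 𝒳 => ω 0) ⁻¹' {z | u ≤ V z}
              ⊆ {ω : ℕ → 𝒳 | V (ω 0) = V y}ᶜ := by
            intro ω hω hmem
            simp only [Set.mem_preimage, Set.mem_setOf_eq] at hω hmem
            rw [hmem] at hω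
            exact absurd hω (not_le.mpr hy)
          refine le_antisymm ?_ zero_le
          calc mc.law y ((fun ω : ℕ → 𝒳 => ω 0) ⁻¹' {z | u ≤ V z})
              ≤ mc.law y {ω : ℕ → 𝒳 | V (ω 0) = V y}ᶜ := measure_mono hsub
            _ = 0 := by
                rw [measure_compl hTmeas (measure_ne_top _ _), hT1, measure_univ, tsub_self]
        have hlt := hδ.trans_le (iInf_le _ y)
        rw [hzero] at hlt
        exact lt_irrefl 0 hlt
      have hempty : {ω : ℕ → 𝒳 | ∃ᶠ n in atTop, M < V (ω n)}ᶜ = ∅ := by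
        ext ω
        simp only [Set.mem_compl_iff, Set.mem_setOf_eq, Set.mem_empty_iff_false, iff_false,
          not_not]
        exact Filter.Frequently.of_forall fun n => lt_of_lt_of_le hMu (hall (ω n))
      rw [hempty]
      exact measure_empty
    · obtain ⟨m, rfl⟩ : ∃ m, n₀ = m + 1 := ⟨n₀ - 1, by omega⟩
      set δ := ⨅ y : 𝒳, mc.stepDist y (m + 1) {z : 𝒳 | u ≤ V z} with hδdef
      have hδpos : 0 < δ := hδ
      have hδ1 : δ ≤ 1 := by
        refine le_trans (iInf_le _ x) ?_
        have := mc.stepDist_isProb x (m + 1)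
        exact prob_le_one
      have hbound : ∀ y : 𝒳, mc.stepDist y (m + 1) {z : 𝒳 | V z < u} ≤ 1 - δ := by
        intro y
        have hp := mc.stepDist_isProb y (m + 1)
        have hdisj : Disjoint {z : 𝒳 | V z < u} {z : 𝒳 | u ≤ V z} := by
          rw [Set.disjoint_left]
          intro z h1 h2
          simp only [Set.mem_setOf_eq] at h1 h2
          exact absurd h2 (not_le.mpr h1)
        have hunion : {z : 𝒳 | V z < u} ∪ {z : 𝒳 | u ≤ V z} = Set.univ := by
          ext z
          simp [lt_or_ge]
        have hadd : mc.stepDist y (m + 1) {z : 𝒳 | V z < u}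
            + mc.stepDist y (m + 1) {z : 𝒳 | u ≤ V z} = 1 := by
          rw [← measure_union hdisj hAmeas, hunion, measure_univ]
        have hle : δ ≤ mc.stepDist y (m + 1) {z : 𝒳 | u ≤ V z} := iInf_le _ y
        refine ENNReal.le_sub_of_add_le_right (hδ1.trans_lt ENNReal.one_lt_top).ne ?_
        calc mc.stepDist y (m + 1) {z : 𝒳 | V z < u} + δ
            ≤ mc.stepDist y (m + 1) {z : 𝒳 | V z < u}
              + mc.stepDist y (m + 1) {z : 𝒳 | u ≤ V z} := add_le_add le_rfl hle
          _ = 1 := hadd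
      have hAN : ∀ N : ℕ, mc.law x {ω : ℕ → 𝒳 | ∀ n, N ≤ n → V (ω n) ≤ M} = 0 := by
        intro N
        set B : ℕ → Set (ℕ → 𝒳) :=
          fun j => {ω | ∀ i ≤ j, V (ω (N + i * (m + 1))) < u} with hB
        have hBmeas : ∀ j, MeasurableSet (B j) := by
          intro j
          have : B j = ⋂ i : ℕ, ⋂ _ : i ≤ j, {ω : ℕ → 𝒳 | V (ω (N + i * (m + 1))) < u} := by
            ext ω
            simp [hB]
          rw [this]
          exact MeasurableSet.iInter fun i => MeasurableSet.iInter fun _ =>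
            measurableSet_lt (V_meas.comp (measurable_pi_apply _)) measurable_const
        have hBdep : ∀ j, ∀ ω ω' : ℕ → 𝒳,
            (∀ i ≤ N + j * (m + 1), ω i = ω' i) → (ω ∈ B j ↔ ω' ∈ B j) := by
          intro j ω ω' h
          have hidx : ∀ i ≤ j, ω (N + i * (m + 1)) = ω' (N + i * (m + 1)) := fun i hi =>
            h _ (Nat.add_le_add_left (Nat.mul_le_mul_right _ hi) N)
          constructor
          · intro hω i hi
            rw [← hidx i hi]
            exact hω i hi
          · intro hω i hi
            rw [hidx i hi]
            exact hω i hi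
        have hAltu : MeasurableSet {z : 𝒳 | V z < u} :=
          measurableSet_lt V_meas measurable_const
        have hstep : ∀ j, mc.law x (B (j + 1)) ≤ (1 - δ) * mc.law x (B j) := by
          intro j
          have hidx : N + (j + 1) * (m + 1) = (N + j * (m + 1)) + (m + 1) := by ring
          have hBsucc : B (j + 1)
              = B j ∩ {ω : ℕ → 𝒳 | ω ((N + j * (m + 1)) + (m + 1)) ∈ {z : 𝒳 | V z < u}} := by
            ext ω
            simp only [hB, Set.mem_setOf_eq, Set.mem_inter_iff]
            constructor
            · intro h
              refine ⟨fun i hi => h i (Nat.le_succ_of_le hi), ?_⟩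
              rw [← hidx]
              exact h (j + 1) le_rfl
            · rintro ⟨h1, h2⟩ i hi
              rcases Nat.lt_or_ge i (j + 1) with hlt | hge
              · exact h1 i (Nat.lt_succ_iff.mp hlt)
              · have hieq : i = j + 1 := le_antisymm hi hge
                subst hieq
                rw [hidx]
                exact h2
          rw [hBsucc,
            mc.multistep x (N + j * (m + 1)) (B j) (hBmeas j) (hBdep j) m
              {z : 𝒳 | V z < u} hAltu]
          calc ∫⁻ ω in B j, mc.stepDist (ω (N + j * (m + 1))) (m + 1) {z : 𝒳 | V z < u}
                ∂(mc.law x)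
              ≤ ∫⁻ _ in B j, (1 - δ) ∂(mc.law x) := lintegral_mono fun ω => hbound _
            _ = (1 - δ) * mc.law x (B j) := by rw [setLIntegral_const]
        have hpow : ∀ j, mc.law x (B j) ≤ (1 - δ) ^ j := by
          intro j
          induction j with
          | zero => simpa using prob_le_one
          | succ j ih =>
            calc mc.law x (B (j + 1)) ≤ (1 - δ) * mc.law x (B j) := hstep j
              _ ≤ (1 - δ) * (1 - δ) ^ j := mul_le_mul_right ih _
              _ = (1 - δ) ^ (j + 1) := by rw [pow_succ, mul_comm]
        have hlt1 : (1 : ℝ≥0∞) - δ < 1 :=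
          ENNReal.sub_lt_self ENNReal.one_ne_top one_ne_zero hδpos.ne'
        have htend : Tendsto (fun j : ℕ => (1 - δ) ^ j) atTop (nhds 0) :=
          ENNReal.tendsto_pow_atTop_nhds_zero_of_lt_one hlt1
        have hsub : ∀ j, {ω : ℕ → 𝒳 | ∀ n, N ≤ n → V (ω n) ≤ M} ⊆ B j := by
          intro j ω hω i hi
          exact lt_of_le_of_lt (hω _ (Nat.le_add_right N _)) hMu
        have hle0 := ge_of_tendsto' htend
          (fun j => (measure_mono (hsub j)).trans (hpow j))
        exact le_antisymm hle0 zero_le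
      have hcompl : {ω : ℕ → 𝒳 | ∃ᶠ n in atTop, M < V (ω n)}ᶜ
          = ⋃ N : ℕ, {ω : ℕ → 𝒳 | ∀ n, N ≤ n → V (ω n) ≤ M} := by
        ext ω
        simp [Filter.not_frequently, Filter.eventually_atTop, not_lt]
      rw [hcompl]
      exact measure_iUnion_null fun N => hAN N
  have hInter : mc.law x (⋂ m : ℕ, {ω : ℕ → 𝒳 | ∃ᶠ n in atTop, (m : ℝ) < V (ω n)}) = 1 := by
    have hc : mc.law x (⋂ m : ℕ, {ω : ℕ → 𝒳 | ∃ᶠ n in atTop, (m : ℝ) < V (ω n)})ᶜ = 0 := by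
      rw [Set.compl_iInter]
      exact measure_iUnion_null fun m => key m
    have hm : MeasurableSet (⋂ m : ℕ, {ω : ℕ → 𝒳 | ∃ᶠ n in atTop, (m : ℝ) < V (ω n)}) :=
      MeasurableSet.iInter fun m => hSmeas m
    rwa [prob_compl_eq_zero_iff hm] at hc
  have hsubset : (⋂ m : ℕ, {ω : ℕ → 𝒳 | ∃ᶠ n in atTop, (m : ℝ) < V (ω n)})
      ⊆ nonConfined V := by
    intro ω hω M
    obtain ⟨m, hm⟩ := exists_nat_ge M
    exact (Set.mem_iInter.mp hω m).mono fun n hn => lt_of_le_of_lt hm hn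
  exact le_antisymm prob_le_one (hInter ▸ measure_mono hsubset)
end

section
/- (Maximal inequality.) Let (ℱ_n)_{n∈ℕ} be a filtration on a probability space and ξ = (ξ_n)_{n∈ℕ} an (ℱ_n)-adapted process taking values in [0,1]. Define the (ℱ_n)-stopping time τ_r = inf{n ∈ ℕ : ξ_n > r} (inf ∅ = ∞), and assume that for some r ∈ (0,1] and a locally bounded measurable function f : ℕ × [0,1] → ℝ₊, the process ( ξ_{n∧τ_r} − Σ_{j=0}^{n∧τ_r − 1} f(j, ξ_j) )_{n∈ℕ} is an (ℱ_n)-supermartingale. Then for any t ∈ ℕ, almost surely: ℙ( sup_{j ∈ [0,t)∩ℕ} ξ_j > r | ℱ₀ ) ≤ r^{-1} ( ξ₀ + 𝔼[ Σ_{j=0}^{(t∧τ_r) − 1} f(j, ξ_j) | ℱ₀ ] ). -/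
open MeasureTheory ProbabilityTheory Filter Set
open scoped ENNReal NNReal

/-- First time the process `ξ` exceeds the level `r` (`⊤` if never). -/
noncomputable def hitTimeGT {Ω : Type*} (ξ : ℕ → Ω → ℝ) (r : ℝ) (ω : Ω) : ℕ∞ :=
  ⨅ (n : ℕ) (_ : r < ξ n ω), (n : ℕ∞)

/-- **Proposition (maximal inequality).** Let `ξ` be an `(ℱ_n)`-adapted `[0,1]`-valued
process, `τ_r = inf{n : ξ_n > r}`, and suppose for some `r ∈ (0,1]` and a locally
bounded measurable `f : ℕ × [0,1] → ℝ₊` the stopped process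
`ξ_{n∧τ_r} − ∑_{j<n∧τ_r} f(j,ξ_j)` is an `(ℱ_n)`-supermartingale. Then for any `t ∈ ℕ`,
`ℙ(sup_{j<t} ξ_j > r | ℱ₀) ≤ r⁻¹ (ξ₀ + 𝔼[∑_{j<t∧τ_r} f(j,ξ_j) | ℱ₀])` a.s. -/
theorem maximal_inequality
    {Ω : Type*} {m0 : MeasurableSpace Ω} (μ : Measure Ω) [IsProbabilityMeasure μ]
    (ℱ : Filtration ℕ m0) (ξ : ℕ → Ω → ℝ)
    (hadapt : Adapted ℱ ξ) (hξ : ∀ n ω, ξ n ω ∈ Set.Icc (0 : ℝ) 1)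
    (r : ℝ) (hr : r ∈ Set.Ioc (0 : ℝ) 1)
    (f : ℕ → ℝ → ℝ) (hf_meas : ∀ j, Measurable (f j))
    (hf_nonneg : ∀ j s, 0 ≤ f j s)
    (hf_bdd : ∀ j, ∃ M : ℝ, ∀ s ∈ Set.Icc (0 : ℝ) 1, f j s ≤ M)
    (hsuper : Supermartingale
      (fun (n : ℕ) ω => ξ ((min (n : ℕ∞) (hitTimeGT ξ r ω)).toNat) ω -
        ∑ j ∈ Finset.range ((min (n : ℕ∞) (hitTimeGT ξ r ω)).toNat), f j (ξ j ω))
      ℱ μ) :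
    ∀ t : ℕ, ∀ᵐ ω ∂μ,
      (μ[Set.indicator {ω' | ∃ j < t, r < ξ j ω'} (fun _ => (1 : ℝ)) | ℱ 0]) ω ≤
        r⁻¹ * (ξ 0 ω +
          (μ[fun ω' => ∑ j ∈ Finset.range ((min (t : ℕ∞) (hitTimeGT ξ r ω')).toNat),
              f j (ξ j ω') | ℱ 0]) ω) := by
  classical
  intro t
  have hr0 : (0 : ℝ) < r := hr.1
  have hξmeas : ∀ j, Measurable (ξ j) := fun j => (hadapt j).mono (ℱ.le j) le_rfl
  -- value of the hitting time
  have hit_eq : ∀ ω (h : ∃ n, r < ξ n ω), hitTimeGT ξ r ω = (Nat.find h : ℕ∞) := by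
    intro ω h
    apply le_antisymm
    · exact iInf_le_of_le (Nat.find h) (iInf_le _ (Nat.find_spec h))
    · refine le_iInf fun n => le_iInf fun hn => ?_
      exact_mod_cast Nat.find_min' h hn
  have hit_top : ∀ ω, (¬ ∃ n, r < ξ n ω) → hitTimeGT ξ r ω = ⊤ := by
    intro ω h
    push_neg at h
    simp only [hitTimeGT, iInf_eq_top]
    intro n hn
    exact absurd hn (not_lt.2 (h n))
  have toNat_min : ∀ (s k : ℕ), (min (s : ℕ∞) (k : ℕ∞)).toNat = min s k := by
    intro s k
    rcases le_total s k with h | h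
    · simp [min_eq_left (ENat.coe_le_coe.2 h), min_eq_left h]
    · simp [min_eq_right (ENat.coe_le_coe.2 h), min_eq_right h]
  set N : Ω → ℕ := fun ω => (min (t : ℕ∞) (hitTimeGT ξ r ω)).toNat with hNdef
  have hNval : ∀ ω, N ω = if h : ∃ n, r < ξ n ω then min t (Nat.find h) else t := by
    intro ω
    split_ifs with h
    · rw [hNdef]; simp only; rw [hit_eq ω h, toNat_min]
    · rw [hNdef]; simp only; rw [hit_top ω h]; simp
  have hNle : ∀ ω, N ω ≤ t := by
    intro ω; rw [hNval]; split_ifs <;> simp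
  have hNmeas : Measurable N := by
    apply measurable_to_countable'
    intro k
    have hpre : N ⁻¹' {k} = {x | N x = k} := by ext x; simp
    rw [hpre]
    rcases lt_trichotomy k t with hk | hk | hk
    · have hset : {x | N x = k} = {x | r < ξ k x} ∩ ⋂ j < k, {x | ξ j x ≤ r} := by
        ext ω
        simp only [mem_setOf_eq, mem_inter_iff, mem_iInter]
        rw [hNval]
        constructor
        · intro hNk
          split_ifs at hNk with h
          · have hf : Nat.find h = k := by omega
            refine ⟨hf ▸ Nat.find_spec h, fun j hj => ?_⟩
            exact not_lt.1 (Nat.find_min h (hf ▸ hj))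
          · omega
        · rintro ⟨h1, h2⟩
          have h : ∃ n, r < ξ n ω := ⟨k, h1⟩
          rw [dif_pos h]
          have : Nat.find h = k :=
            (Nat.find_eq_iff h).2 ⟨h1, fun j hj => not_lt.2 (h2 j hj)⟩
          omega
      rw [hset]
      exact (measurableSet_lt measurable_const (hξmeas k)).inter
        (MeasurableSet.iInter fun j => MeasurableSet.iInter fun _ =>
          measurableSet_le (hξmeas j) measurable_const)
    · have hset : {x | N x = k} = ⋂ j < t, {x | ξ j x ≤ r} := by
        ext ω
        simp only [mem_setOf_eq, mem_iInter]
        rw [hNval]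
        constructor
        · intro hNk j hj
          split_ifs at hNk with h
          · by_contra hc
            have := Nat.find_min' h (not_le.1 hc)
            omega
          · exact not_lt.1 fun hc => h ⟨j, hc⟩
        · intro h2
          split_ifs with h
          · have : t ≤ Nat.find h := by
              by_contra hc
              exact absurd (Nat.find_spec h) (not_lt.2 (h2 _ (not_le.1 hc)))
            omega
          · omega
      rw [hset]
      exact MeasurableSet.iInter fun j => MeasurableSet.iInter fun _ =>
        measurableSet_le (hξmeas j) measurable_const
    · have hset : {x | N x = k} = ∅ := by
        ext ω
        simp only [mem_setOf_eq, mem_empty_iff_false, iff_false]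
        intro hc
        have := hNle ω
        omega
      rw [hset]; exact MeasurableSet.empty
  -- the sum process
  set S : Ω → ℝ := fun ω => ∑ j ∈ Finset.range (N ω), f j (ξ j ω) with hSdef
  have hSeq : S = fun ω => ∑ j ∈ Finset.range t, if j < N ω then f j (ξ j ω) else 0 := by
    funext ω
    rw [hSdef]
    simp only
    rw [← Finset.sum_filter]
    congr 1
    ext j
    simp only [Finset.mem_filter, Finset.mem_range]
    have := hNle ω
    omega
  have hSmeas : Measurable S := by
    rw [hSeq]
    refine Finset.measurable_sum _ fun j _ => Measurable.ite ?_ ((hf_meas j).comp (hξmeas j))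
      measurable_const
    exact hNmeas (by trivial)
  choose M hM using hf_bdd
  have hS0 : ∀ ω, 0 ≤ S ω := fun ω => Finset.sum_nonneg fun j _ => hf_nonneg j _
  have hSB : ∀ ω, S ω ≤ ∑ j ∈ Finset.range t, M j := by
    intro ω
    calc S ω ≤ ∑ j ∈ Finset.range t, f j (ξ j ω) :=
          Finset.sum_le_sum_of_subset_of_nonneg
            (Finset.range_subset_range.2 (hNle ω)) (fun j _ _ => hf_nonneg j _)
      _ ≤ ∑ j ∈ Finset.range t, M j :=
          Finset.sum_le_sum fun j _ => hM j _ (hξ j ω)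
  have hSint : Integrable S μ := by
    refine Integrable.mono' (integrable_const (∑ j ∈ Finset.range t, M j))
      hSmeas.aestronglyMeasurable (ae_of_all _ fun ω => ?_)
    rw [Real.norm_eq_abs, abs_of_nonneg (hS0 ω)]
    exact hSB ω
  -- the event
  set A : Set Ω := {ω' | ∃ j < t, r < ξ j ω'} with hAdef
  have hAmeas : MeasurableSet A := by
    have : A = ⋃ j < t, {ω | r < ξ j ω} := by
      ext ω; simp [hAdef]
    rw [this]
    exact MeasurableSet.iUnion fun j => MeasurableSet.iUnion fun _ =>
      measurableSet_lt measurable_const (hξmeas j)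
  have hIndint : Integrable (A.indicator fun _ => (1 : ℝ)) μ :=
    (integrable_const (1 : ℝ)).indicator hAmeas
  -- the supermartingale
  set Y : ℕ → Ω → ℝ := fun (n : ℕ) ω => ξ ((min (n : ℕ∞) (hitTimeGT ξ r ω)).toNat) ω -
    ∑ j ∈ Finset.range ((min (n : ℕ∞) (hitTimeGT ξ r ω)).toNat), f j (ξ j ω) with hYdef
  have hYt : ∀ ω, Y t ω = ξ (N ω) ω - S ω := fun ω => rfl
  have hY0 : ∀ ω, Y 0 ω = ξ 0 ω := by
    intro ω
    rw [hYdef]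
    simp only
    have h0 : ((0 : ℕ) : ℕ∞) ⊓ hitTimeGT ξ r ω = 0 := by simp
    rw [h0]
    simp
  have hYint : Integrable (Y t) μ := hsuper.integrable t
  -- key pointwise inequality
  have hpoint : ∀ ω, r * A.indicator (fun _ => (1 : ℝ)) ω ≤ ξ (N ω) ω := by
    intro ω
    by_cases hω : ω ∈ A
    · rw [Set.indicator_of_mem hω, mul_one]
      obtain ⟨j, hj, hrj⟩ := hω
      have h : ∃ n, r < ξ n ω := ⟨j, hrj⟩
      have hfind : Nat.find h < t := lt_of_le_of_lt (Nat.find_min' h hrj) hj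
      have hNf : N ω = Nat.find h := by rw [hNval, dif_pos h]; omega
      rw [hNf]
      exact le_of_lt (Nat.find_spec h)
    · rw [Set.indicator_of_notMem hω, mul_zero]
      exact (hξ _ ω).1
  -- conditional expectation estimates
  have h1 : μ[r • (A.indicator fun _ => (1 : ℝ)) | ℱ 0] ≤ᵐ[μ] μ[Y t + S | ℱ 0] := by
    refine condExp_mono (hIndint.smul r) (hYint.add hSint) (ae_of_all _ fun ω => ?_)
    have := hpoint ω
    have hyts : (Y t + S) ω = ξ (N ω) ω := by
      simp only [Pi.add_apply, hYt ω]
      ring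
    simp only [Pi.smul_apply, smul_eq_mul, hyts]
    exact this
  have h2 : μ[Y t + S | ℱ 0] =ᵐ[μ] μ[Y t | ℱ 0] + μ[S | ℱ 0] := condExp_add hYint hSint _
  have h3 : μ[Y t | ℱ 0] ≤ᵐ[μ] Y 0 := hsuper.condExp_ae_le (Nat.zero_le t)
  have h4 : μ[r • (A.indicator fun _ => (1 : ℝ)) | ℱ 0]
      =ᵐ[μ] r • μ[A.indicator fun _ => (1 : ℝ) | ℱ 0] := condExp_smul r _ _
  filter_upwards [h1, h2, h3, h4] with ω e1 e2 e3 e4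
  rw [le_inv_mul_iff₀ hr0]
  have e4' : r * (μ[A.indicator fun _ => (1 : ℝ) | ℱ 0]) ω
      = (μ[r • (A.indicator fun _ => (1 : ℝ)) | ℱ 0]) ω := by
    rw [e4]; simp
  rw [e4']
  calc (μ[r • (A.indicator fun _ => (1 : ℝ)) | ℱ 0]) ω
      ≤ (μ[Y t + S | ℱ 0]) ω := e1
    _ = (μ[Y t | ℱ 0]) ω + (μ[S | ℱ 0]) ω := by rw [e2]; simp
    _ ≤ ξ 0 ω + (μ[S | ℱ 0]) ω := by
        have := e3
        rw [hY0 ω] at this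
        linarith
end

section
/- (Lower bound on modulated excursion sums under the L-drift condition.) Assume the standard Markov chain setup and the L-drift condition L(V,φ,Ψ) with constant ℓ₀ ∈ [1,∞). Then for every ℓ₀' ∈ [ℓ₀,∞), any measurable h : ℝ₊ → ℝ₊ that is continuous, positive and non-decreasing on [ℓ₀',∞), any q ∈ (0,1), any ℓ ∈ (ℓ₀',∞) and m ∈ (0,∞), for all x with V(x) ≥ ℓ+m and all t ≥ G_h(ℓ+m): ℙ_x( Σ_{j=0}^{S_{(ℓ)}} h(V(X_j)) ≥ t ) ≥ q·𝟙{V(x) < G_h^{-1}(t)/(1−q)²}·C_{ℓ,m}/Ψ( G_h^{-1}(t)/(1−q)² ) + q·𝟙{V(x) ≥ G_h^{-1}(t)/(1−q)²}, where C_{ℓ,m} ∈ (0,1) is the constant from part (ii) of the L-drift condition and G_h^{-1} is the inverse of G_h. -/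
open MeasureTheory ProbabilityTheory Filter Set
open scoped ENNReal NNReal

section AuxProofs

set_option linter.unusedSectionVars false

lemma aux_le_hitTime_iff {𝒳 : Type*} {s : Set 𝒳} {ω : ℕ → 𝒳} {n : ℕ} :
    (n : ℕ∞) ≤ hitTime s ω ↔ ∀ j < n, ω j ∉ s := by
  simp only [hitTime, le_iInf_iff]
  constructor
  · intro H j hj hm
    exact absurd (Nat.cast_le.mp (H j hm)) (Nat.not_le.mpr hj)
  · intro H j hm
    by_contra hc
    exact H j (Nat.cast_lt.mp (not_le.mp hc)) hm

lemma aux_hitTime_le {𝒳 : Type*} {s : Set 𝒳} {ω : ℕ → 𝒳} {j : ℕ} (h : ω j ∈ s) :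
    hitTime s ω ≤ j := iInf₂_le j h

variable {𝒳 : Type*} [TopologicalSpace 𝒳] [MeasurableSpace 𝒳] [BorelSpace 𝒳]

lemma aux_stepB (mc : MarkovChain 𝒳) (x : 𝒳) (n : ℕ) (C : Set (ℕ → 𝒳))
    (hC : MeasurableSet C)
    (hdep : ∀ ω ω' : ℕ → 𝒳, (∀ i ≤ n, ω i = ω' i) → (ω ∈ C ↔ ω' ∈ C))
    (g : 𝒳 → ℝ≥0∞) (hg : Measurable g) :
    ∫⁻ ω in C, g (ω (n + 1)) ∂mc.law x
      = ∫⁻ ω in C, ∫⁻ y, g y ∂mc.P (ω n) ∂mc.law x := by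
  haveI := mc.isMarkov
  have hmeasP : Measurable fun ω : ℕ → 𝒳 => mc.P (ω n) :=
    mc.P.measurable.comp (measurable_pi_apply n)
  have key : ((mc.law x).restrict C).map (fun ω => ω (n + 1))
      = ((mc.law x).restrict C).bind fun ω => mc.P (ω n) := by
    ext A hA
    rw [Measure.map_apply (measurable_pi_apply (n+1)) hA,
      Measure.bind_apply hA hmeasP.aemeasurable,
      Measure.restrict_apply ((measurable_pi_apply (n+1)) hA),
      Set.inter_comm]
    exact mc.law_markov x n C A hC hA hdep
  calc ∫⁻ ω in C, g (ω (n + 1)) ∂mc.law x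
      = ∫⁻ y, g y ∂(((mc.law x).restrict C).map fun ω => ω (n+1)) :=
        (lintegral_map hg (measurable_pi_apply (n+1))).symm
    _ = ∫⁻ y, g y ∂(((mc.law x).restrict C).bind fun ω => mc.P (ω n)) := by rw [key]
    _ = ∫⁻ ω in C, ∫⁻ y, g y ∂mc.P (ω n) ∂mc.law x :=
        Measure.lintegral_bind hmeasP.aemeasurable hg.aemeasurable

variable {mc : MarkovChain 𝒳} {V : 𝒳 → ℝ} {φ Ψ : ℝ → ℝ}

/-- positivity of `r ↦ r φ(1/r)` on `[1,∞)`. -/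
lemma aux_fpos (ld : LDrift mc V φ Ψ) {r : ℝ} (hr : 1 ≤ r) :
    0 < r * φ (1 / r) := by
  have h0 : ∀ s : ℝ, 1 ≤ s → 0 ≤ s * φ (1 / s) := by
    intro s hs
    by_contra hneg
    push_neg at hneg
    have hev : ∀ᶠ r' in atTop, s * φ (1 / s) < r' * φ (1 / r') :=
      ld.rφ_lim.eventually (eventually_gt_nhds hneg)
    obtain ⟨r', hr', hr's⟩ := (hev.and (eventually_gt_atTop s)).exists
    have := ld.rφ_anti (Set.mem_Ici.mpr hs) (Set.mem_Ici.mpr (le_of_lt (lt_of_le_of_lt hs hr's))) hr's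
    simp only at this
    linarith
  have h1 := ld.rφ_anti (Set.mem_Ici.mpr hr) (Set.mem_Ici.mpr (by linarith : (1:ℝ) ≤ r + 1))
    (lt_add_one r)
  have h2 := h0 (r + 1) (by linarith)
  simp only at h1
  linarith

lemma aux_kernelBound (ld : LDrift mc V φ Ψ) {u : ℝ} (hu : 1 ≤ u)
    {z : 𝒳} (hz : u ≤ V z) :
    ∫⁻ y, ENNReal.ofReal (V y)⁻¹ ∂mc.P z
      ≤ ENNReal.ofReal (V z)⁻¹ + ENNReal.ofReal (φ (1 / u)) := by
  haveI := mc.isMarkov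
  have hV1 : ∀ y, (1:ℝ) ≤ V y := ld.V_one_le
  have hVz : (0:ℝ) < V z := lt_of_lt_of_le (by linarith) hz
  have hmeas : Measurable fun y => (V y)⁻¹ := (ld.V_cont.measurable).inv
  have hint : Integrable (fun y => (V y)⁻¹) (mc.P z) := by
    refine Integrable.mono' (integrable_const (1:ℝ)) hmeas.aestronglyMeasurable ?_
    filter_upwards with y
    have h1 := hV1 y
    have h2 : (0:ℝ) < V y := by linarith
    rw [Real.norm_eq_abs, abs_of_nonneg (by positivity)]
    exact inv_le_one_of_one_le₀ h1
  have hlin : ∫⁻ y, ENNReal.ofReal (V y)⁻¹ ∂mc.P z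
      = ENNReal.ofReal (∫ y, (V y)⁻¹ ∂mc.P z) := by
    rw [ofReal_integral_eq_lintegral_ofReal hint]
    filter_upwards with y
    have := hV1 y; positivity
  -- drift bound
  have hdrift : ∫ y, (V y)⁻¹ ∂mc.P z ≤ (V z)⁻¹ + φ ((V z)⁻¹) := by
    have := ld.drift z
    have hite : (0:ℝ) ≤ (if V z ≤ ld.ℓ₀ then ld.b else 0) := by
      split <;> simp [ld.b_nonneg]
    linarith
  -- φ ((V z)⁻¹) ≤ φ (1/u)
  have hφmem : (V z)⁻¹ ∈ Set.Ioc (0:ℝ) 1 := ⟨by positivity, inv_le_one_of_one_le₀ (hV1 z)⟩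
  have hφu_mem : (1/u) ∈ Set.Ioc (0:ℝ) 1 := ⟨by positivity, by
    rw [div_le_one (by linarith)]; linarith⟩
  have hφnn : 0 ≤ φ ((V z)⁻¹) := ld.φ_nonneg _ hφmem
  have hφu_nn : 0 ≤ φ (1/u) := ld.φ_nonneg _ hφu_mem
  have hφle : φ ((V z)⁻¹) ≤ φ (1 / u) := by
    rcases eq_or_lt_of_le hz with heq | hlt
    · rw [← heq, inv_eq_one_div]
    · have hanti := le_of_lt (ld.rφ_anti (Set.mem_Ici.mpr hu)
        (Set.mem_Ici.mpr (le_of_lt (lt_of_le_of_lt hu hlt))) hlt)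
      simp only at hanti
      -- V z * φ (1 / V z) ≤ u * φ (1 / u)
      rw [inv_eq_one_div]
      have hupos : (0:ℝ) < u := by linarith
      calc φ (1 / V z) = (V z * φ (1 / V z)) / V z := by field_simp
        _ ≤ (u * φ (1 / u)) / V z := div_le_div_of_nonneg_right hanti hVz.le
        _ ≤ (u * φ (1 / u)) / u := by
            apply div_le_div_of_nonneg_left (by positivity) hupos hz
        _ = φ (1 / u) := by field_simp
  calc ∫⁻ y, ENNReal.ofReal (V y)⁻¹ ∂mc.P z
      = ENNReal.ofReal (∫ y, (V y)⁻¹ ∂mc.P z) := hlin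
    _ ≤ ENNReal.ofReal ((V z)⁻¹ + φ ((V z)⁻¹)) := ENNReal.ofReal_le_ofReal hdrift
    _ = ENNReal.ofReal (V z)⁻¹ + ENNReal.ofReal (φ ((V z)⁻¹)) :=
        ENNReal.ofReal_add (by positivity) hφnn
    _ ≤ ENNReal.ofReal (V z)⁻¹ + ENNReal.ofReal (φ (1 / u)) :=
        add_le_add le_rfl (ENNReal.ofReal_le_ofReal hφle)

lemma aux_excursionLB (ld : LDrift mc V φ Ψ)
    {u v q : ℝ} (hu : 1 ≤ u) (hv : u ≤ v) (hq : q ∈ Set.Ioo (0:ℝ) 1)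
    {n₀ : ℕ} (hn₀ : 1 ≤ n₀)
    (hbudget : u * (1 / v + ((n₀ - 1 : ℕ) : ℝ) * φ (1 / u)) ≤ 1 - q)
    (x : 𝒳) (k : ℕ) (C : Set (ℕ → 𝒳)) (hC : MeasurableSet C)
    (hdep : ∀ ω ω' : ℕ → 𝒳, (∀ i ≤ k, ω i = ω' i) → (ω ∈ C ↔ ω' ∈ C))
    (hCv : ∀ ω ∈ C, v ≤ V (ω k)) :
    ENNReal.ofReal q * mc.law x C
      ≤ mc.law x (C ∩ {ω | ∀ i < n₀, u ≤ V (ω (k + i))}) := by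
  classical
  haveI := mc.law_prob x
  obtain ⟨N, rfl⟩ : ∃ N, n₀ = N + 1 := ⟨n₀ - 1, (Nat.succ_pred_eq_of_pos hn₀).symm⟩
  have hbudget' : u * (1 / v + (N : ℝ) * φ (1 / u)) ≤ 1 - q := by
    simpa using hbudget
  have mV : Measurable V := ld.V_cont.measurable
  have hupos : (0:ℝ) < u := by linarith
  have hvpos : (0:ℝ) < v := by linarith
  have hφnn : 0 ≤ φ (1/u) := ld.φ_nonneg _ ⟨by positivity, by
    rw [div_le_one hupos]; linarith⟩
  set B : ℕ → Set (ℕ → 𝒳) := fun n => {ω | ∀ i < n, u ≤ V (ω (k + i))} with hB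
  have hBmeas : ∀ n, MeasurableSet (B n) := by
    intro n
    have : B n = ⋂ (i : ℕ) (_ : i < n), {ω : ℕ → 𝒳 | u ≤ V (ω (k + i))} := by
      ext ω; simp [hB]
    rw [this]
    exact MeasurableSet.biInter (Set.to_countable _) fun i _ =>
      measurableSet_le measurable_const (mV.comp (measurable_pi_apply _))
  have hXmeas : ∀ i:ℕ, Measurable fun ω : ℕ → 𝒳 => ENNReal.ofReal (V (ω (k+i)))⁻¹ :=
    fun i => ENNReal.measurable_ofReal.comp ((mV.comp (measurable_pi_apply _)).inv)
  set D : ℕ → Set (ℕ → 𝒳) := fun i => (C ∩ B i) ∩ {ω | V (ω (k + i)) < u} with hD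
  have hDmeas : ∀ i, MeasurableSet (D i) := fun i =>
    ((hC.inter (hBmeas i)).inter
      (measurableSet_lt (mV.comp (measurable_pi_apply _)) measurable_const))
  set G : ℕ → ℝ≥0∞ :=
    fun i => ∫⁻ ω in D i, ENNReal.ofReal (V (ω (k+i)))⁻¹ ∂mc.law x with hG
  have IND : ∀ n : ℕ,
      (∫⁻ ω in C ∩ B n, ENNReal.ofReal (V (ω (k+n)))⁻¹ ∂mc.law x)
        + ∑ i ∈ Finset.range n, G i
      ≤ (ENNReal.ofReal (1/v) + (n : ℝ≥0∞) * ENNReal.ofReal (φ (1/u))) * mc.law x C := by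
    intro n
    induction n with
    | zero =>
      have hB0 : C ∩ B 0 = C := by
        ext ω; simp [hB]
      rw [hB0]
      simp only [Finset.range_zero, Finset.sum_empty, add_zero, Nat.cast_zero, zero_mul]
      calc ∫⁻ ω in C, ENNReal.ofReal (V (ω (k+0)))⁻¹ ∂mc.law x
          ≤ ∫⁻ _ω in C, ENNReal.ofReal (1/v) ∂mc.law x := by
            refine setLIntegral_mono measurable_const fun ω hω => ?_
            refine ENNReal.ofReal_le_ofReal ?_
            rw [inv_eq_one_div]
            exact one_div_le_one_div_of_le hvpos (hCv ω hω)
        _ = ENNReal.ofReal (1/v) * mc.law x C := setLIntegral_const _ _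
    | succ n ih =>
      have hsplit : C ∩ B n = (C ∩ B (n+1)) ∪ D n := by
        ext ω
        constructor
        · rintro ⟨hωC, hωB⟩
          by_cases hc : u ≤ V (ω (k+n))
          · exact Or.inl ⟨hωC, fun i hi => by
              rcases Nat.lt_succ_iff_lt_or_eq.mp hi with hlt | heq
              · exact hωB i hlt
              · subst heq; exact hc⟩
          · exact Or.inr ⟨⟨hωC, hωB⟩, not_le.mp hc⟩
        · rintro (⟨h1, h2⟩ | ⟨⟨h1, h2⟩, _⟩)
          · exact ⟨h1, fun i hi => h2 i (Nat.lt_succ_of_lt hi)⟩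
          · exact ⟨h1, h2⟩
      have hdisj : Disjoint (C ∩ B (n+1)) (D n) := by
        rw [Set.disjoint_left]
        rintro ω ⟨_, h2⟩ ⟨_, h4⟩
        exact absurd (h2 n (Nat.lt_succ_self n)) (not_le.mpr h4)
      have hstep : ∫⁻ ω in C ∩ B (n+1), ENNReal.ofReal (V (ω (k+(n+1))))⁻¹ ∂mc.law x
          ≤ (∫⁻ ω in C ∩ B (n+1), ENNReal.ofReal (V (ω (k+n)))⁻¹ ∂mc.law x)
             + ENNReal.ofReal (φ (1/u)) * mc.law x C := by
        have hdep' : ∀ ω ω' : ℕ → 𝒳, (∀ i ≤ k + n, ω i = ω' i) →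
            (ω ∈ C ∩ B (n+1) ↔ ω' ∈ C ∩ B (n+1)) := by
          intro ω ω' hagree
          have hC' := hdep ω ω' (fun i hi => hagree i (le_trans hi (Nat.le_add_right k n)))
          have hB' : ω ∈ B (n+1) ↔ ω' ∈ B (n+1) := by
            simp only [hB, Set.mem_setOf_eq]
            constructor <;> intro hmem i hi
            · rw [← hagree (k+i) (by omega)]; exact hmem i hi
            · rw [hagree (k+i) (by omega)]; exact hmem i hi
          exact and_congr hC' hB'
        have hrw := aux_stepB mc x (k+n) (C ∩ B (n+1)) (hC.inter (hBmeas (n+1))) hdep'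
          (fun y => ENNReal.ofReal (V y)⁻¹)
          (ENNReal.measurable_ofReal.comp mV.inv)
        rw [show k + (n+1) = (k+n) + 1 from rfl, hrw]
        calc ∫⁻ ω in C ∩ B (n+1), ∫⁻ y, ENNReal.ofReal (V y)⁻¹ ∂mc.P (ω (k+n)) ∂mc.law x
            ≤ ∫⁻ ω in C ∩ B (n+1),
                (ENNReal.ofReal (V (ω (k+n)))⁻¹ + ENNReal.ofReal (φ (1/u))) ∂mc.law x := by
              refine setLIntegral_mono ((hXmeas n).add measurable_const) fun ω hω => ?_
              exact aux_kernelBound ld hu (hω.2 n (Nat.lt_succ_self n))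
          _ = (∫⁻ ω in C ∩ B (n+1), ENNReal.ofReal (V (ω (k+n)))⁻¹ ∂mc.law x)
              + ENNReal.ofReal (φ (1/u)) * mc.law x (C ∩ B (n+1)) := by
              rw [lintegral_add_right _ measurable_const, setLIntegral_const]
          _ ≤ (∫⁻ ω in C ∩ B (n+1), ENNReal.ofReal (V (ω (k+n)))⁻¹ ∂mc.law x)
              + ENNReal.ofReal (φ (1/u)) * mc.law x C :=
              add_le_add le_rfl (mul_le_mul_right (measure_mono Set.inter_subset_left) _)
      have hunion : (∫⁻ ω in C ∩ B (n+1), ENNReal.ofReal (V (ω (k+n)))⁻¹ ∂mc.law x) + G n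
          = ∫⁻ ω in C ∩ B n, ENNReal.ofReal (V (ω (k+n)))⁻¹ ∂mc.law x := by
        rw [hG]
        conv_rhs => rw [hsplit]
        rw [lintegral_union (hDmeas n) hdisj]
      calc (∫⁻ ω in C ∩ B (n+1), ENNReal.ofReal (V (ω (k+(n+1))))⁻¹ ∂mc.law x)
            + ∑ i ∈ Finset.range (n+1), G i
          ≤ ((∫⁻ ω in C ∩ B (n+1), ENNReal.ofReal (V (ω (k+n)))⁻¹ ∂mc.law x)
              + ENNReal.ofReal (φ (1/u)) * mc.law x C)
            + (∑ i ∈ Finset.range n, G i + G n) := by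
            rw [Finset.sum_range_succ]
            exact add_le_add hstep le_rfl
        _ = ((∫⁻ ω in C ∩ B (n+1), ENNReal.ofReal (V (ω (k+n)))⁻¹ ∂mc.law x) + G n
              + ∑ i ∈ Finset.range n, G i)
            + ENNReal.ofReal (φ (1/u)) * mc.law x C := by ring
        _ = ((∫⁻ ω in C ∩ B n, ENNReal.ofReal (V (ω (k+n)))⁻¹ ∂mc.law x)
              + ∑ i ∈ Finset.range n, G i)
            + ENNReal.ofReal (φ (1/u)) * mc.law x C := by rw [hunion]
        _ ≤ (ENNReal.ofReal (1/v) + (n : ℝ≥0∞) * ENNReal.ofReal (φ (1/u))) * mc.law x C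
            + ENNReal.ofReal (φ (1/u)) * mc.law x C := add_le_add ih le_rfl
        _ = (ENNReal.ofReal (1/v) + ((n:ℝ≥0∞) + 1) * ENNReal.ofReal (φ (1/u))) * mc.law x C := by
            ring
        _ = (ENNReal.ofReal (1/v) + ((n+1 : ℕ) : ℝ≥0∞) * ENNReal.ofReal (φ (1/u)))
            * mc.law x C := by
            norm_cast
  -- covering the drop event by first-drop pieces
  have hcover : C \ B (N+1) ⊆ ⋃ i ∈ Finset.range (N+1), D i := by
    rintro ω ⟨hωC, hωB⟩
    have hex : ∃ i, V (ω (k + i)) < u := by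
      by_contra hno
      push_neg at hno
      exact hωB fun i _ => hno i
    have hex2 : ∃ i, i < N+1 ∧ V (ω (k+i)) < u := by
      by_contra hno
      push_neg at hno
      exact hωB fun i hi => hno i hi
    have hi₀ : V (ω (k + Nat.find hex)) < u := Nat.find_spec hex
    have hmin : ∀ j < Nat.find hex, u ≤ V (ω (k + j)) :=
      fun j hj => not_lt.mp (Nat.find_min hex hj)
    have hi₀lt : Nat.find hex < N+1 := by
      obtain ⟨i, hiN, hidrop⟩ := hex2
      exact lt_of_le_of_lt (Nat.find_le hidrop) hiN
    exact Set.mem_biUnion (Finset.mem_range.mpr hi₀lt) ⟨⟨hωC, hmin⟩, hi₀⟩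
  have hdropbound : mc.law x (C \ B (N+1)) ≤ ENNReal.ofReal (1 - q) * mc.law x C := by
    have h1 : mc.law x (C \ B (N+1)) ≤ ∑ i ∈ Finset.range (N+1), mc.law x (D i) :=
      le_trans (measure_mono hcover) (measure_biUnion_finset_le _ _)
    have h2 : ∀ i, mc.law x (D i) ≤ ENNReal.ofReal u * G i := by
      intro i
      have h0 : mc.law x (D i) = ∫⁻ _ω in D i, 1 ∂mc.law x := (setLIntegral_one _).symm
      rw [h0, hG, ← lintegral_const_mul _ (hXmeas i)]
      refine setLIntegral_mono (measurable_const.mul (hXmeas i)) fun ω hω => ?_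
      rcases hω with ⟨⟨_, _⟩, hdrop⟩
      have hV1 := ld.V_one_le (ω (k+i))
      have hVpos : (0:ℝ) < V (ω (k+i)) := by linarith
      rw [← ENNReal.ofReal_mul hupos.le, ← ENNReal.ofReal_one]
      refine ENNReal.ofReal_le_ofReal ?_
      have h1u : 1 ≤ u / V (ω (k+i)) := (one_le_div hVpos).mpr (le_of_lt hdrop)
      simpa [div_eq_mul_inv] using h1u
    have hGN : G N ≤ ∫⁻ ω in C ∩ B N, ENNReal.ofReal (V (ω (k+N)))⁻¹ ∂mc.law x := by
      rw [hG]
      exact lintegral_mono' (Measure.restrict_mono Set.inter_subset_left le_rfl) le_rfl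
    have h3 : ∑ i ∈ Finset.range (N+1), G i
        ≤ (ENNReal.ofReal (1/v) + (N : ℝ≥0∞) * ENNReal.ofReal (φ (1/u))) * mc.law x C := by
      calc ∑ i ∈ Finset.range (N+1), G i
          = ∑ i ∈ Finset.range N, G i + G N := Finset.sum_range_succ _ _
        _ ≤ ∑ i ∈ Finset.range N, G i
            + ∫⁻ ω in C ∩ B N, ENNReal.ofReal (V (ω (k+N)))⁻¹ ∂mc.law x :=
            add_le_add le_rfl hGN
        _ = (∫⁻ ω in C ∩ B N, ENNReal.ofReal (V (ω (k+N)))⁻¹ ∂mc.law x)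
            + ∑ i ∈ Finset.range N, G i := add_comm _ _
        _ ≤ _ := IND N
    calc mc.law x (C \ B (N+1))
        ≤ ∑ i ∈ Finset.range (N+1), mc.law x (D i) := h1
      _ ≤ ∑ i ∈ Finset.range (N+1), ENNReal.ofReal u * G i :=
          Finset.sum_le_sum fun i _ => h2 i
      _ = ENNReal.ofReal u * ∑ i ∈ Finset.range (N+1), G i := by
          rw [Finset.mul_sum]
      _ ≤ ENNReal.ofReal u
          * ((ENNReal.ofReal (1/v) + (N : ℝ≥0∞) * ENNReal.ofReal (φ (1/u))) * mc.law x C) :=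
          mul_le_mul_right h3 _
      _ = (ENNReal.ofReal u * (ENNReal.ofReal (1/v) + (N : ℝ≥0∞) * ENNReal.ofReal (φ (1/u))))
          * mc.law x C := (mul_assoc _ _ _).symm
      _ ≤ ENNReal.ofReal (1-q) * mc.law x C := by
          refine mul_le_mul_left ?_ _
          have hcast : (N : ℝ≥0∞) * ENNReal.ofReal (φ (1/u))
              = ENNReal.ofReal ((N:ℝ) * φ (1/u)) := by
            rw [ENNReal.ofReal_mul (Nat.cast_nonneg N), ENNReal.ofReal_natCast]
          rw [hcast, ← ENNReal.ofReal_add (by positivity) (by positivity),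
            ← ENNReal.ofReal_mul hupos.le]
          exact ENNReal.ofReal_le_ofReal hbudget'
  have hfin : ENNReal.ofReal (1-q) * mc.law x C ≠ ⊤ :=
    ENNReal.mul_ne_top ENNReal.ofReal_ne_top (measure_ne_top _ _)
  have hpart : mc.law x (C ∩ B (N+1)) + mc.law x (C \ B (N+1)) = mc.law x C :=
    measure_inter_add_diff C (hBmeas (N+1))
  have hsum : ENNReal.ofReal q * mc.law x C + ENNReal.ofReal (1-q) * mc.law x C
      = mc.law x C := by
    rw [← add_mul, ← ENNReal.ofReal_add (le_of_lt hq.1) (by linarith [hq.2] : (0:ℝ) ≤ 1 - q),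
      show q + (1-q) = 1 by ring, ENNReal.ofReal_one, one_mul]
  have hmain : ENNReal.ofReal q * mc.law x C + ENNReal.ofReal (1-q) * mc.law x C
      ≤ mc.law x (C ∩ B (N+1)) + ENNReal.ofReal (1-q) * mc.law x C := by
    rw [hsum]
    calc mc.law x C = mc.law x (C ∩ B (N+1)) + mc.law x (C \ B (N+1)) := hpart.symm
      _ ≤ mc.law x (C ∩ B (N+1)) + ENNReal.ofReal (1-q) * mc.law x C :=
          add_le_add le_rfl hdropbound
  exact (ENNReal.add_le_add_iff_right hfin).mp hmain


lemma aux_modSum_lb {ℓ₀' : ℝ} (hfun : ℝ → ℝ)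
    (h_mono : MonotoneOn hfun (Set.Ici ℓ₀')) (h_nonneg : ∀ r, 0 ≤ hfun r)
    {ℓ u t : ℝ} (hu0 : ℓ₀' ≤ u) (hℓu : ℓ ≤ u) {n₀ : ℕ} (k : ℕ)
    (ht : t ≤ (n₀ : ℝ) * hfun u) (ω : ℕ → 𝒳)
    (h1 : ∀ j < k, ℓ ≤ V (ω j)) (h2 : ∀ i < n₀, u ≤ V (ω (k + i))) :
    ENNReal.ofReal t ≤ modSum hfun V (hitTime {y | V y < ℓ}) ω := by
  classical
  have hT : ∀ i < n₀, ((k + i : ℕ) : ℕ∞) ≤ hitTime {y | V y < ℓ} ω := by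
    intro i hi
    rw [aux_le_hitTime_iff]
    intro j hj
    simp only [Set.mem_setOf_eq, not_lt]
    rcases lt_or_ge j k with hc | hc
    · exact h1 j hc
    · obtain ⟨i', rfl⟩ := Nat.exists_eq_add_of_le hc
      have hi' : i' < n₀ := by omega
      exact le_trans hℓu (h2 i' hi')
  have hsub : ∑ i ∈ Finset.range n₀, ENNReal.ofReal (hfun (V (ω (k + i))))
      ≤ modSum hfun V (hitTime {y | V y < ℓ}) ω := by
    unfold modSum
    refine le_trans (le_of_eq ?_)
      (ENNReal.sum_le_tsum ((Finset.range n₀).image (fun i => k + i)))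
    rw [Finset.sum_image (by intro a _ b _ hab; exact Nat.add_left_cancel hab)]
    refine Finset.sum_congr rfl fun i hi => ?_
    rw [if_pos (hT i (Finset.mem_range.mp hi))]
  refine le_trans ?_ hsub
  calc ENNReal.ofReal t ≤ ENNReal.ofReal ((n₀:ℝ) * hfun u) := ENNReal.ofReal_le_ofReal ht
    _ = (n₀ : ℝ≥0∞) * ENNReal.ofReal (hfun u) := by
        rw [ENNReal.ofReal_mul (Nat.cast_nonneg _), ENNReal.ofReal_natCast]
    _ = ∑ _i ∈ Finset.range n₀, ENNReal.ofReal (hfun u) := by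
        rw [Finset.sum_const, Finset.card_range, nsmul_eq_mul]
    _ ≤ ∑ i ∈ Finset.range n₀, ENNReal.ofReal (hfun (V (ω (k + i)))) := by
        refine Finset.sum_le_sum fun i hi => ENNReal.ofReal_le_ofReal ?_
        exact h_mono (Set.mem_Ici.mpr hu0)
          (Set.mem_Ici.mpr (le_trans hu0 (h2 i (Finset.mem_range.mp hi))))
          (h2 i (Finset.mem_range.mp hi))

end AuxProofs


set_option maxHeartbeats 1000000

/-- **Proposition (lower bound on modulated excursion sums under the L-drift condition).**
Under the standard setup and the L-drift condition with constant `ℓ₀`: for every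
`ℓ₀' ≥ ℓ₀`, any measurable `h : ℝ₊ → ℝ₊` continuous, positive and non-decreasing on
`[ℓ₀',∞)`, any `q ∈ (0,1)`, `ℓ ∈ (ℓ₀',∞)`, `m > 0`, all `x ∈ {V ≥ ℓ+m}` and all
`t ≥ G_h(ℓ+m)`:
`ℙ_x(∑_{j=0}^{S_{(ℓ)}} h(V(X_j)) ≥ t) ≥
  q 𝟙{V(x) < G_h⁻¹(t)/(1-q)²} C_{ℓ,m}/Ψ(G_h⁻¹(t)/(1-q)²) + q 𝟙{V(x) ≥ G_h⁻¹(t)/(1-q)²}`. -/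
theorem modulated_excursion_sum_lower_bound
    {𝒳 : Type*} [TopologicalSpace 𝒳] [LocallyCompactSpace 𝒳]
    [MeasurableSpace 𝒳] [BorelSpace 𝒳]
    (mc : MarkovChain 𝒳) (setup : StdSetup mc)
    (V : 𝒳 → ℝ) (φ Ψ : ℝ → ℝ) (ld : LDrift mc V φ Ψ)
    (ℓ₀' : ℝ) (hℓ₀' : ld.ℓ₀ ≤ ℓ₀')
    (h : ℝ → ℝ) (h_meas : Measurable h) (h_nonneg : ∀ r, 0 ≤ h r)
    (h_pos : ∀ r, ℓ₀' ≤ r → 0 < h r)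
    (h_cont : ContinuousOn h (Set.Ici ℓ₀'))
    (h_mono : MonotoneOn h (Set.Ici ℓ₀'))
    (q : ℝ) (hq : q ∈ Set.Ioo (0 : ℝ) 1)
    (Ginv : ℝ → ℝ)
    (hGinv_left : ∀ r, ℓ₀' ≤ r → Ginv (Gfun q φ h r) = r)
    (hGinv_right : ∀ t, Gfun q φ h ℓ₀' ≤ t → Gfun q φ h (Ginv t) = t ∧ 0 ≤ Ginv t) :
    ∀ ℓ, ℓ₀' < ℓ → ∀ m : ℝ, 0 < m → ∀ x : 𝒳, ℓ + m ≤ V x →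
      ∀ t : ℝ, Gfun q φ h (ℓ + m) ≤ t →
        ENNReal.ofReal (q * (if V x < Ginv t / (1 - q) ^ 2
            then ld.Cconst ℓ m / Ψ (Ginv t / (1 - q) ^ 2) else 1)) ≤
          mc.law x {ω | ENNReal.ofReal t ≤
            modSum h V (hitTime {y | V y < ℓ}) ω} := by
  obtain ⟨hq0, hq1⟩ := hq
  intro ℓ hℓ m hm x hx t ht
  haveI := mc.law_prob x
  have mV : Measurable V := ld.V_cont.measurable
  have h1q : (0:ℝ) < 1 - q := by linarith
  have hℓ1 : (1:ℝ) ≤ ℓ₀' := le_trans ld.one_le_ℓ₀ hℓ₀'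
  have hℓm0' : ℓ₀' < ℓ + m := by linarith
  have hℓm1 : (1:ℝ) ≤ ℓ + m := by linarith
  have hfpos : ∀ r : ℝ, 1 ≤ r → 0 < r * φ (1/r) := fun r hr => aux_fpos ld hr
  -- continuity of Gfun on [ℓ₀', ∞)
  have hGcont : ContinuousOn (Gfun q φ h) (Set.Ici ℓ₀') := by
    have hnum : ContinuousOn (fun r => q * (1 - q) * h r) (Set.Ici ℓ₀') :=
      continuousOn_const.mul h_cont
    have hinv : ContinuousOn (fun r : ℝ => 1 / r) (Set.Ici ℓ₀') :=
      continuousOn_const.div continuousOn_id (fun r hr => by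
        have h1 : (1:ℝ) ≤ r := le_trans hℓ1 hr
        intro h0; rw [h0] at h1; linarith)
    have hden : ContinuousOn (fun r : ℝ => r * φ (1 / r)) (Set.Ici ℓ₀') := by
      refine continuousOn_id.mul (ld.φ_cont.comp hinv ?_)
      intro r hr
      have hr1 : (1:ℝ) ≤ r := le_trans hℓ1 hr
      exact ⟨by positivity, by rw [div_le_one (by linarith)]; linarith⟩
    exact hnum.div hden (fun r hr => ne_of_gt (hfpos r (le_trans hℓ1 hr)))
  have hhlm : 0 < h (ℓ + m) := h_pos _ (le_of_lt hℓm0')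
  have htpos : 0 < t := by
    refine lt_of_lt_of_le ?_ ht
    have hden := hfpos (ℓ + m) hℓm1
    have hnum : 0 < q * (1 - q) * h (ℓ + m) := by positivity
    exact div_pos hnum hden
  -- existence of r* ≥ ℓ+m with Gfun r* = t
  obtain ⟨rstar, hrmem, hrval⟩ : ∃ r', (ℓ + m ≤ r') ∧ Gfun q φ h r' = t := by
    have hεpos : 0 < q * (1 - q) * h (ℓ + m) / t := by positivity
    have hev : ∀ᶠ r in atTop, r * φ (1/r) < q * (1 - q) * h (ℓ + m) / t :=
      ld.rφ_lim.eventually (eventually_lt_nhds hεpos)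
    obtain ⟨r₁, hr₁lt, hr₁ge⟩ := (hev.and (eventually_ge_atTop (ℓ + m))).exists
    have hr₁1 : (1:ℝ) ≤ r₁ := le_trans hℓm1 hr₁ge
    have hd := hfpos r₁ hr₁1
    have hGr₁ : t ≤ Gfun q φ h r₁ := by
      have hmono := h_mono (Set.mem_Ici.mpr (le_of_lt hℓm0'))
        (Set.mem_Ici.mpr (le_trans (le_of_lt hℓm0') hr₁ge)) hr₁ge
      have hnum_le : q * (1 - q) * h (ℓ + m) ≤ q * (1 - q) * h r₁ :=
        mul_le_mul_of_nonneg_left hmono (by positivity)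
      have step1 : q * (1 - q) * h (ℓ + m) / (r₁ * φ (1/r₁)) ≤ Gfun q φ h r₁ := by
        unfold Gfun
        rw [one_div r₁] at hd ⊢
        exact div_le_div_of_nonneg_right hnum_le hd.le
      refine le_trans ?_ step1
      have step2 : q * (1 - q) * h (ℓ + m) / (q * (1 - q) * h (ℓ + m) / t)
          ≤ q * (1 - q) * h (ℓ + m) / (r₁ * φ (1/r₁)) := by
        apply div_le_div_of_nonneg_left (by positivity) hd (le_of_lt hr₁lt)
      refine le_trans (le_of_eq ?_) step2
      field_simp
    obtain ⟨r', hr'mem, hr'val⟩ :=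
      intermediate_value_Icc hr₁ge (hGcont.mono (fun z hz =>
        Set.mem_Ici.mpr (le_trans (le_of_lt hℓm0') hz.1))) ⟨ht, hGr₁⟩
    exact ⟨r', hr'mem.1, hr'val⟩
  have hGinvt : Ginv t = rstar := by
    rw [← hrval, hGinv_left rstar (le_trans (le_of_lt hℓm0') hrmem)]
  set u := Ginv t with hu_def
  have hulm : ℓ + m ≤ u := by rw [hGinvt]; exact hrmem
  have hu1 : (1:ℝ) ≤ u := le_trans hℓm1 hulm
  have huℓ₀ : ℓ₀' ≤ u := le_trans (le_of_lt hℓm0') hulm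
  have htu : Gfun q φ h u = t := by rw [hGinvt]; exact hrval
  have hA : 0 < u * φ (1/u) := hfpos u hu1
  have hhu : 0 < h u := h_pos u huℓ₀
  have ht_eq : t * (u * φ (1/u)) = q * (1-q) * h u := by
    have hφ0 : φ (1/u) ≠ 0 := fun h0 => by rw [h0, mul_zero] at hA; exact lt_irrefl _ hA
    rw [← htu]; unfold Gfun; field_simp
  set R := u / (1-q)^2 with hR
  have hq2pos : (0:ℝ) < (1-q)^2 := by positivity
  have hq2lt : (1-q)^2 < 1 := by nlinarith
  have hupos : (0:ℝ) < u := by linarith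
  have huR : u ≤ R := by rw [hR, le_div_iff₀ hq2pos]; nlinarith
  have huRs : u < R := by rw [hR, lt_div_iff₀ hq2pos]; nlinarith
  have hlmR : ℓ + m < R := lt_of_le_of_lt hulm huRs
  have hRpos : 0 < R := lt_of_lt_of_le hupos huR
  -- the horizon n₀
  set n₀ := Nat.ceil (t / h u) with hn₀def
  have hn₀pos : 1 ≤ n₀ := by
    rw [hn₀def]
    exact Nat.one_le_iff_ne_zero.mpr (Nat.ceil_pos.mpr (by positivity)).ne'
  have htn₀ : t ≤ (n₀:ℝ) * h u := by
    rw [← div_le_iff₀ hhu]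
    exact Nat.le_ceil _
  have hφu_nn : 0 ≤ φ (1/u) := ld.φ_nonneg _ ⟨by positivity, by
    rw [div_le_one hupos]; linarith⟩
  have hcastn : ((n₀ - 1 : ℕ) : ℝ) ≤ t / h u := by
    have hlt : (n₀ : ℝ) < t / h u + 1 := Nat.ceil_lt_add_one (by positivity)
    have hcast : ((n₀ - 1 : ℕ):ℝ) = (n₀:ℝ) - 1 := by
      rw [Nat.cast_sub hn₀pos]; norm_num
    linarith
  have hbudget : ∀ v : ℝ, R ≤ v → u * (1 / v + ((n₀ - 1 : ℕ) : ℝ) * φ (1 / u)) ≤ 1 - q := by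
    intro v hvR
    have hvpos : 0 < v := lt_of_lt_of_le hRpos hvR
    have hRv : (1-q)^2 * R = u := by rw [hR]; field_simp
    have hterm1 : u * (1/v) ≤ (1-q)^2 := by
      rw [mul_one_div, div_le_iff₀ hvpos]
      calc u = (1-q)^2 * R := hRv.symm
        _ ≤ (1-q)^2 * v := mul_le_mul_of_nonneg_left hvR hq2pos.le
    have hterm2 : u * (((n₀ - 1 : ℕ):ℝ) * φ (1/u)) ≤ q * (1-q) := by
      have hm1 : ((n₀ - 1:ℕ):ℝ) * (u * φ (1/u)) ≤ (t / h u) * (u * φ (1/u)) :=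
        mul_le_mul_of_nonneg_right hcastn (le_of_lt hA)
      have heq : (t / h u) * (u * φ (1/u)) = q * (1-q) := by
        rw [div_mul_eq_mul_div, ht_eq, mul_div_assoc, div_self (ne_of_gt hhu), mul_one]
      nlinarith [hm1, heq]
    nlinarith [hterm1, hterm2]
  -- measurability of the B-sets
  have hBmeas : ∀ k : ℕ, MeasurableSet {ω : ℕ → 𝒳 | ∀ i < n₀, u ≤ V (ω (k + i))} := by
    intro k
    have hEq : {ω : ℕ → 𝒳 | ∀ i < n₀, u ≤ V (ω (k + i))}
        = ⋂ (i : ℕ) (_ : i < n₀), {ω : ℕ → 𝒳 | u ≤ V (ω (k + i))} := by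
      ext ω; simp
    rw [hEq]
    exact MeasurableSet.biInter (Set.to_countable _) fun i _ =>
      measurableSet_le measurable_const (mV.comp (measurable_pi_apply _))
  by_cases hcase : V x < R
  ·
    rw [if_pos hcase]
    have hhit := ld.hit_lb ℓ m (lt_of_le_of_lt hℓ₀' hℓ) hm R hlmR x hx
    set E : ℕ → Set (ℕ → 𝒳) := fun k =>
      {ω | (∀ j < k, ℓ ≤ V (ω j) ∧ V (ω j) ≤ R) ∧ R < V (ω k)} with hE_def
    have hEmeas : ∀ k, MeasurableSet (E k) := by
      intro k
      have hEq : E k = (⋂ (j : ℕ) (_ : j < k),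
          ({ω : ℕ → 𝒳 | ℓ ≤ V (ω j)} ∩ {ω | V (ω j) ≤ R})) ∩ {ω | R < V (ω k)} := by
        ext ω
        simp only [hE_def, Set.mem_setOf_eq, Set.mem_inter_iff, Set.mem_iInter]
      rw [hEq]
      exact (MeasurableSet.biInter (Set.to_countable _) fun j _ =>
        ((measurableSet_le measurable_const (mV.comp (measurable_pi_apply j))).inter
         (measurableSet_le (mV.comp (measurable_pi_apply j)) measurable_const))).inter
        (measurableSet_lt measurable_const (mV.comp (measurable_pi_apply k)))
    have hEdep : ∀ k, ∀ ω ω' : ℕ → 𝒳, (∀ i ≤ k, ω i = ω' i) → (ω ∈ E k ↔ ω' ∈ E k) := by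
      intro k ω ω' hag
      simp only [hE_def, Set.mem_setOf_eq]
      constructor
      · rintro ⟨hj, hk⟩
        exact ⟨fun j hjk => by rw [← hag j (le_of_lt hjk)]; exact hj j hjk,
          by rw [← hag k le_rfl]; exact hk⟩
      · rintro ⟨hj, hk⟩
        exact ⟨fun j hjk => by rw [hag j (le_of_lt hjk)]; exact hj j hjk,
          by rw [hag k le_rfl]; exact hk⟩
    have hEkey : ∀ k, ENNReal.ofReal q * mc.law x (E k)
        ≤ mc.law x (E k ∩ {ω | ∀ i < n₀, u ≤ V (ω (k + i))}) := by
      intro k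
      refine aux_excursionLB ld hu1 huR ⟨hq0, hq1⟩ hn₀pos (hbudget R le_rfl) x k (E k)
        (hEmeas k) (hEdep k) ?_
      rintro ω ⟨_, hk⟩
      exact le_of_lt hk
    have hincl : ∀ k, E k ∩ {ω | ∀ i < n₀, u ≤ V (ω (k + i))} ⊆
        {ω | ENNReal.ofReal t ≤ modSum h V (hitTime {y | V y < ℓ}) ω} := by
      rintro k ω ⟨hω1, hω2⟩
      exact aux_modSum_lb h h_mono h_nonneg huℓ₀ (by linarith) k htn₀ ω
        (fun j hj => (hω1.1 j hj).1) hω2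
    have hcover : {ω | hitTime {y | R < V y} ω < hitTime {y | V y < ℓ} ω} ⊆ ⋃ k, E k := by
      intro ω hω
      simp only [Set.mem_setOf_eq] at hω
      have hex : ∃ n, R < V (ω n) := by
        by_contra hno
        push_neg at hno
        have hTtop : hitTime {y | R < V y} ω = ⊤ :=
          top_unique (le_iInf fun n => le_iInf fun hn => absurd hn (not_lt.mpr (hno n)))
        rw [hTtop] at hω
        exact absurd hω not_top_lt
      have hkspec : R < V (ω (Nat.find hex)) := Nat.find_spec hex
      have hkmin : ∀ j < Nat.find hex, V (ω j) ≤ R :=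
        fun j hj => not_lt.mp (Nat.find_min hex hj)
      have hkleT : ((Nat.find hex : ℕ) : ℕ∞) ≤ hitTime {y | R < V y} ω := by
        rw [aux_le_hitTime_iff]
        intro j hj
        simp only [Set.mem_setOf_eq, not_lt]
        exact hkmin j hj
      refine Set.mem_iUnion.mpr ⟨Nat.find hex, ⟨fun j hj => ⟨?_, hkmin j hj⟩, hkspec⟩⟩
      by_contra hc
      push_neg at hc
      have hSle : hitTime {y | V y < ℓ} ω ≤ (j : ℕ∞) := aux_hitTime_le hc
      have hlt : hitTime {y | V y < ℓ} ω < hitTime {y | R < V y} ω :=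
        lt_of_lt_of_le (lt_of_le_of_lt hSle (Nat.cast_lt.mpr hj)) hkleT
      exact absurd hω (not_lt.mpr (le_of_lt hlt))
    have hEdisj : ∀ a b : ℕ, a < b → Disjoint (E a) (E b) := by
      intro a b hab
      rw [Set.disjoint_left]
      rintro ω ⟨_, ha2⟩ ⟨hb1, _⟩
      exact absurd (hb1 a hab).2 (not_le.mpr ha2)
    have hdisj : Pairwise (Function.onFun Disjoint
        (fun k => E k ∩ {ω | ∀ i < n₀, u ≤ V (ω (k + i))})) := by
      intro a b hab
      rcases hab.lt_or_gt with hl | hl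
      · exact (hEdisj a b hl).mono Set.inter_subset_left Set.inter_subset_left
      · exact ((hEdisj b a hl).symm).mono Set.inter_subset_left Set.inter_subset_left
    calc ENNReal.ofReal (q * (ld.Cconst ℓ m / Ψ R))
        = ENNReal.ofReal q * ENNReal.ofReal (ld.Cconst ℓ m / Ψ R) :=
          ENNReal.ofReal_mul hq0.le
      _ ≤ ENNReal.ofReal q
          * mc.law x {ω | hitTime {y | R < V y} ω < hitTime {y | V y < ℓ} ω} :=
          mul_le_mul_right hhit _
      _ ≤ ENNReal.ofReal q * mc.law x (⋃ k, E k) :=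
          mul_le_mul_right (measure_mono hcover) _
      _ ≤ ENNReal.ofReal q * ∑' k, mc.law x (E k) :=
          mul_le_mul_right (measure_iUnion_le _) _
      _ = ∑' k, ENNReal.ofReal q * mc.law x (E k) := ENNReal.tsum_mul_left.symm
      _ ≤ ∑' k, mc.law x (E k ∩ {ω | ∀ i < n₀, u ≤ V (ω (k + i))}) :=
          ENNReal.tsum_le_tsum hEkey
      _ = mc.law x (⋃ k, E k ∩ {ω | ∀ i < n₀, u ≤ V (ω (k + i))}) :=
          (measure_iUnion hdisj (fun k => (hEmeas k).inter (hBmeas k))).symm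
      _ ≤ mc.law x {ω | ENNReal.ofReal t ≤ modSum h V (hitTime {y | V y < ℓ}) ω} :=
          measure_mono (Set.iUnion_subset hincl)
  · -- already above the threshold
    rw [if_neg hcase]
    push_neg at hcase
    set C := {ω : ℕ → 𝒳 | V x ≤ V (ω 0)} with hC_def
    have hCmeas : MeasurableSet C :=
      measurableSet_le measurable_const (mV.comp (measurable_pi_apply 0))
    have hCdep : ∀ ω ω' : ℕ → 𝒳, (∀ i ≤ 0, ω i = ω' i) → (ω ∈ C ↔ ω' ∈ C) := by
      intro ω ω' hag
      simp only [hC_def, Set.mem_setOf_eq, hag 0 le_rfl]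
    have hCv : ∀ ω ∈ C, V x ≤ V (ω 0) := fun ω hω => hω
    have hlawC : mc.law x C = 1 := by
      refine le_antisymm prob_le_one ?_
      rw [← mc.law_start x, hC_def]
      refine measure_mono fun ω hω => ?_
      simp only [Set.mem_setOf_eq] at hω ⊢
      rw [hω]
    have hkey := aux_excursionLB ld hu1 (le_trans huR hcase) ⟨hq0, hq1⟩ hn₀pos
      (hbudget (V x) hcase) x 0 C hCmeas hCdep hCv
    rw [hlawC, mul_one] at hkey
    have hincl : C ∩ {ω | ∀ i < n₀, u ≤ V (ω (0 + i))} ⊆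
        {ω | ENNReal.ofReal t ≤ modSum h V (hitTime {y | V y < ℓ}) ω} := by
      rintro ω ⟨_, hω2⟩
      exact aux_modSum_lb h h_mono h_nonneg huℓ₀ (by linarith) 0 htn₀ ω
        (fun j hj => absurd hj (Nat.not_lt_zero j)) hω2
    calc ENNReal.ofReal (q * 1) = ENNReal.ofReal q := by rw [mul_one]
      _ ≤ mc.law x (C ∩ {ω | ∀ i < n₀, u ≤ V (ω (0 + i))}) := hkey
      _ ≤ _ := measure_mono hincl
end

section
/- (Under the L-drift condition, petite sets are bounded.) Assume the standard Markov chain setup and the L-drift condition L(V,φ,Ψ). If a set B ∈ ℬ(𝒳) is petite for the chain X, then there exists r₀ ∈ (1,∞) such that B ⊂ {x ∈ 𝒳 : V(x) ≤ r₀}. -/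
open MeasureTheory ProbabilityTheory Filter Set
open scoped ENNReal NNReal

/-- `B` is petite for the chain `mc`: there exist a probability measure `a` on
`ℕ ∖ {0}` and a non-zero finite measure `ν` with
`∑_{j≥1} P^j(x,·) a(j) ≥ ν(·)` for all `x ∈ B`. -/
def IsPetite {𝒳 : Type*} [MeasurableSpace 𝒳] (mc : MarkovChain 𝒳) (B : Set 𝒳) : Prop :=
  B.Nonempty ∧
  ∃ a : Measure ℕ, IsProbabilityMeasure a ∧ a {0} = 0 ∧
    ∃ ν : Measure 𝒳, IsFiniteMeasure ν ∧ 0 < ν Set.univ ∧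
      ∀ x ∈ B, ∀ A : Set 𝒳, MeasurableSet A →
        ν A ≤ ∑' j : ℕ, a {j} * mc.stepDist x j A

/-- **Lemma (under the L-drift condition, petite sets are bounded).**
If `B` is petite for the chain `X`, then `B ⊆ {V ≤ r₀}` for some `r₀ ∈ (1,∞)`. -/
theorem petite_sets_bounded
    {𝒳 : Type*} [TopologicalSpace 𝒳] [LocallyCompactSpace 𝒳]
    [MeasurableSpace 𝒳] [BorelSpace 𝒳]
    (mc : MarkovChain 𝒳) (setup : StdSetup mc)
    (V : 𝒳 → ℝ) (φ Ψ : ℝ → ℝ) (ld : LDrift mc V φ Ψ)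
    (B : Set 𝒳) (hB : MeasurableSet B) (hpetite : IsPetite mc B) :
    ∃ r₀ : ℝ, 1 < r₀ ∧ B ⊆ {x | V x ≤ r₀} := by
    classical
  haveI := mc.isMarkov
  obtain ⟨-, a, ha_prob, ha0, ν, hν_fin, hν_pos, hmin⟩ := hpetite
  haveI := ha_prob
  haveI := hν_fin
  have hV_meas : Measurable V := ld.V_cont.measurable
  have hVinv_meas : Measurable fun y => (V y)⁻¹ := hV_meas.inv
  have hf_meas : Measurable fun y => ENNReal.ofReal (V y)⁻¹ := hVinv_meas.ennreal_ofReal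
  have hφ1 : 0 ≤ φ 1 := ld.φ_nonneg 1 ⟨one_pos, le_refl 1⟩
  set c : ℝ≥0∞ := ENNReal.ofReal (1 + φ 1) with hc
  have hc1 : 1 ≤ c := by
    rw [hc, show (1 : ℝ≥0∞) = ENNReal.ofReal 1 by simp]
    exact ENNReal.ofReal_le_ofReal (by linarith)
  -- one-step estimate from the drift condition
  have hstep : ∀ x : 𝒳, ∫⁻ y, ENNReal.ofReal (V y)⁻¹ ∂(mc.P x)
      ≤ c * ENNReal.ofReal (V x)⁻¹ := by
    intro x
    have hVx : 1 ≤ V x := ld.V_one_le x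
    have hVxpos : 0 < V x := lt_of_lt_of_le one_pos hVx
    have hint : Integrable (fun y => (V y)⁻¹) (mc.P x) := by
      refine Integrable.mono' (integrable_const 1) hVinv_meas.aestronglyMeasurable ?_
      filter_upwards with y
      have h1 : 1 ≤ V y := ld.V_one_le y
      rw [Real.norm_eq_abs, abs_of_nonneg (inv_nonneg.2 (by linarith))]
      exact inv_le_one_of_one_le₀ h1
    have hnn : 0 ≤ᵐ[mc.P x] fun y => (V y)⁻¹ := by
      filter_upwards with y; exact inv_nonneg.2 (by linarith [ld.V_one_le y])
    rw [← MeasureTheory.ofReal_integral_eq_lintegral_ofReal hint hnn]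
    have h2 : V x * φ ((V x)⁻¹) ≤ φ 1 := by
      rcases eq_or_lt_of_le hVx with h | h
      · rw [← h]; simp
      · have h3 := ld.rφ_anti (Set.mem_Ici.2 le_rfl) (Set.mem_Ici.2 hVx) h
        simp only [one_div] at h3
        simpa using h3.le
    have hφle : φ ((V x)⁻¹) ≤ φ 1 * (V x)⁻¹ := by
      have h4 : 0 ≤ (V x)⁻¹ := inv_nonneg.2 hVxpos.le
      have h5 := mul_le_mul_of_nonneg_right h2 h4
      calc φ ((V x)⁻¹) = V x * φ ((V x)⁻¹) * (V x)⁻¹ := by field_simp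
        _ ≤ φ 1 * (V x)⁻¹ := h5
    have hdr := ld.drift x
    have hite : 0 ≤ (if V x ≤ ld.ℓ₀ then ld.b else 0) := by
      split_ifs; exacts [ld.b_nonneg, le_rfl]
    have hInt_le : ∫ y, (V y)⁻¹ ∂(mc.P x) ≤ (1 + φ 1) * (V x)⁻¹ := by nlinarith
    calc ENNReal.ofReal (∫ y, (V y)⁻¹ ∂(mc.P x))
        ≤ ENNReal.ofReal ((1 + φ 1) * (V x)⁻¹) := ENNReal.ofReal_le_ofReal hInt_le
      _ = c * ENNReal.ofReal (V x)⁻¹ := by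
          rw [hc, ENNReal.ofReal_mul (by linarith)]
  -- Chapman–Kolmogorov recursion for stepDist
  have hrec : ∀ (x : 𝒳) (n : ℕ),
      mc.stepDist x (n + 1) = (mc.stepDist x n).bind (fun y => mc.P y) := by
    intro x n
    haveI := mc.law_prob x
    ext A hA
    have hmk := mc.law_markov x n Set.univ A MeasurableSet.univ hA (fun ω ω' _ => Iff.rfl)
    rw [Set.univ_inter, Measure.restrict_univ] at hmk
    rw [Measure.bind_apply hA mc.P.measurable.aemeasurable, MarkovChain.stepDist,
      Measure.map_apply (measurable_pi_apply (n + 1)) hA]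
    rw [MarkovChain.stepDist, lintegral_map (mc.P.measurable_coe hA) (measurable_pi_apply n)]
    exact hmk
  -- iterated bound
  have hbound : ∀ (x : 𝒳) (n : ℕ),
      ∫⁻ y, ENNReal.ofReal (V y)⁻¹ ∂(mc.stepDist x n) ≤ c ^ n * ENNReal.ofReal (V x)⁻¹ := by
    intro x n
    induction n with
    | zero =>
      haveI := mc.law_prob x
      have hSmeas : MeasurableSet {ω : ℕ → 𝒳 | V (ω 0) = V x} :=
        (hV_meas.comp (measurable_pi_apply 0)) (measurableSet_singleton (V x))
      have hS1 : mc.law x {ω : ℕ → 𝒳 | V (ω 0) = V x} = 1 := by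
        refine le_antisymm prob_le_one ?_
        rw [← mc.law_start x]
        exact measure_mono (fun ω hω => by
          simp only [Set.mem_setOf_eq] at hω ⊢; rw [hω])
      have hae : ∀ᵐ ω ∂(mc.law x), V (ω 0) = V x := by
        rw [ae_iff]
        have : mc.law x {ω : ℕ → 𝒳 | V (ω 0) = V x}ᶜ = 0 := by
          rw [measure_compl hSmeas (measure_ne_top _ _), hS1, measure_univ, tsub_self]
        exact this
      rw [MarkovChain.stepDist, lintegral_map hf_meas (measurable_pi_apply 0)]
      have heq : ∫⁻ ω, ENNReal.ofReal (V (ω 0))⁻¹ ∂(mc.law x)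
          = ∫⁻ _ω, ENNReal.ofReal (V x)⁻¹ ∂(mc.law x) := by
        refine lintegral_congr_ae ?_
        filter_upwards [hae] with ω hω
        rw [hω]
      rw [heq, lintegral_const, measure_univ, mul_one, pow_zero, one_mul]
    | succ n ih =>
      rw [hrec x n, Measure.lintegral_bind mc.P.measurable.aemeasurable hf_meas.aemeasurable]
      calc ∫⁻ y, (∫⁻ z, ENNReal.ofReal (V z)⁻¹ ∂(mc.P y)) ∂(mc.stepDist x n)
          ≤ ∫⁻ y, c * ENNReal.ofReal (V y)⁻¹ ∂(mc.stepDist x n) :=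
            lintegral_mono fun y => hstep y
        _ = c * ∫⁻ y, ENNReal.ofReal (V y)⁻¹ ∂(mc.stepDist x n) :=
            lintegral_const_mul c hf_meas
        _ ≤ c * (c ^ n * ENNReal.ofReal (V x)⁻¹) := mul_le_mul_right ih c
        _ = c ^ (n + 1) * ENNReal.ofReal (V x)⁻¹ := by ring
  -- Markov inequality
  have hmarkov : ∀ (x : 𝒳) (j : ℕ) (ℓ : ℝ), 1 ≤ ℓ →
      mc.stepDist x j {y | V y ≤ ℓ}
        ≤ ENNReal.ofReal ℓ * (c ^ j * ENNReal.ofReal (V x)⁻¹) := by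
    intro x j ℓ hℓ
    have hℓpos : 0 < ℓ := lt_of_lt_of_le one_pos hℓ
    have hsub : {y | V y ≤ ℓ} ⊆ {y | ENNReal.ofReal ℓ⁻¹ ≤ ENNReal.ofReal (V y)⁻¹} := by
      intro y hy
      simp only [Set.mem_setOf_eq] at hy ⊢
      refine ENNReal.ofReal_le_ofReal ?_
      have h1 : 0 < V y := lt_of_lt_of_le one_pos (ld.V_one_le y)
      exact inv_anti₀ h1 hy
    have hmul := MeasureTheory.mul_meas_ge_le_lintegral₀ (μ := mc.stepDist x j)
      hf_meas.aemeasurable (ENNReal.ofReal ℓ⁻¹)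
    have h1 : ENNReal.ofReal ℓ⁻¹ * mc.stepDist x j {y | V y ≤ ℓ}
        ≤ c ^ j * ENNReal.ofReal (V x)⁻¹ :=
      le_trans (mul_le_mul_right (measure_mono hsub) _) (le_trans hmul (hbound x j))
    have hll : ENNReal.ofReal ℓ * ENNReal.ofReal ℓ⁻¹ = 1 := by
      rw [← ENNReal.ofReal_mul hℓpos.le, mul_inv_cancel₀ (ne_of_gt hℓpos), ENNReal.ofReal_one]
    calc mc.stepDist x j {y | V y ≤ ℓ}
        = ENNReal.ofReal ℓ * (ENNReal.ofReal ℓ⁻¹ * mc.stepDist x j {y | V y ≤ ℓ}) := by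
          rw [← mul_assoc, hll, one_mul]
      _ ≤ ENNReal.ofReal ℓ * (c ^ j * ENNReal.ofReal (V x)⁻¹) := mul_le_mul_right h1 _
  -- choose a sublevel set of positive ν-measure
  obtain ⟨n0, hn0⟩ : ∃ n : ℕ, ν {y | V y ≤ (n : ℝ) + 1} ≠ 0 := by
    by_contra h
    push_neg at h
    have hcover : (Set.univ : Set 𝒳) ⊆ ⋃ n : ℕ, {y | V y ≤ (n : ℝ) + 1} := by
      intro y _
      refine Set.mem_iUnion.2 ⟨⌈V y⌉₊, ?_⟩
      simp only [Set.mem_setOf_eq]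
      have := Nat.le_ceil (V y); linarith
    have h0 : ν Set.univ = 0 :=
      le_antisymm (le_trans (measure_mono hcover)
        (le_of_eq (measure_iUnion_null h))) zero_le
    exact absurd h0 (ne_of_gt hν_pos)
  set ℓ : ℝ := (n0 : ℝ) + 1 with hℓdef
  have hℓ1 : 1 ≤ ℓ := by
    have : (0 : ℝ) ≤ (n0 : ℝ) := Nat.cast_nonneg n0
    simp only [hℓdef]; linarith
  set Aℓ : Set 𝒳 := {y | V y ≤ ℓ} with hAℓdef
  have hAℓ : MeasurableSet Aℓ := hV_meas measurableSet_Iic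
  set ε : ℝ≥0∞ := ν Aℓ with hεdef
  have hε0 : ε ≠ 0 := hn0
  have hε_top : ε ≠ ∞ := measure_ne_top ν _
  -- a is a probability measure on ℕ
  have hsum1 : ∑' j : ℕ, a {j} = 1 := by
    rw [← measure_iUnion (fun i j hij => Set.disjoint_singleton.mpr hij)
      (fun i => measurableSet_singleton i), Set.iUnion_of_singleton, measure_univ]
  obtain ⟨N, hN⟩ : ∃ N : ℕ, ∑' k : ℕ, a {k + N} < ε / 2 := by
    have hne : ∑' j : ℕ, a {j} ≠ ∞ := by rw [hsum1]; exact ENNReal.one_ne_top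
    have htd := ENNReal.tendsto_sum_nat_add (fun j => a {j}) hne
    have hpos : 0 < ε / 2 := ENNReal.div_pos hε0 ENNReal.ofNat_ne_top
    exact (htd.eventually_lt_const hpos).exists
  set K : ℝ≥0∞ := ENNReal.ofReal ℓ * c ^ N with hKdef
  -- key claim: uniform lower bound on ofReal (V x)⁻¹ over B
  have claim : ∀ x ∈ B, ε / 2 ≤ K * ENNReal.ofReal (V x)⁻¹ := by
    intro x hx
    haveI := mc.law_prob x
    have hmin' := hmin x hx Aℓ hAℓ
    have hsplit : ∑' j : ℕ, a {j} * mc.stepDist x j Aℓ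
        = (∑ j ∈ Finset.range N, a {j} * mc.stepDist x j Aℓ)
          + ∑' k : ℕ, a {k + N} * mc.stepDist x (k + N) Aℓ :=
      (ENNReal.summable.sum_add_tsum_nat_add').symm
    have hprob_j : ∀ j, mc.stepDist x j Aℓ ≤ 1 := by
      intro j
      haveI : IsProbabilityMeasure (mc.stepDist x j) :=
        MeasureTheory.Measure.isProbabilityMeasure_map (measurable_pi_apply j).aemeasurable
      exact prob_le_one
    have hhead : ∑ j ∈ Finset.range N, a {j} * mc.stepDist x j Aℓ
        ≤ K * ENNReal.ofReal (V x)⁻¹ := by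
      calc ∑ j ∈ Finset.range N, a {j} * mc.stepDist x j Aℓ
          ≤ ∑ j ∈ Finset.range N,
              a {j} * (ENNReal.ofReal ℓ * (c ^ N * ENNReal.ofReal (V x)⁻¹)) := by
            refine Finset.sum_le_sum fun j hj => ?_
            refine mul_le_mul_right (le_trans (hmarkov x j ℓ hℓ1) ?_) _
            exact mul_le_mul_right
              (mul_le_mul_left (pow_le_pow_right₀ hc1 (Finset.mem_range.1 hj).le) _) _
        _ = (∑ j ∈ Finset.range N, a {j})
              * (ENNReal.ofReal ℓ * (c ^ N * ENNReal.ofReal (V x)⁻¹)) := by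
            rw [Finset.sum_mul]
        _ ≤ 1 * (ENNReal.ofReal ℓ * (c ^ N * ENNReal.ofReal (V x)⁻¹)) := by
            refine mul_le_mul_left ?_ _
            rw [← hsum1]; exact ENNReal.sum_le_tsum _
        _ = K * ENNReal.ofReal (V x)⁻¹ := by rw [one_mul, hKdef, mul_assoc]
    have htail2 : ∑' k : ℕ, a {k + N} * mc.stepDist x (k + N) Aℓ ≤ ε / 2 := by
      refine le_trans (ENNReal.tsum_le_tsum fun k => ?_) hN.le
      calc a {k + N} * mc.stepDist x (k + N) Aℓ ≤ a {k + N} * 1 :=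
            mul_le_mul_right (hprob_j _) _
        _ = a {k + N} := mul_one _
    have h5 : ε ≤ K * ENNReal.ofReal (V x)⁻¹ + ε / 2 :=
      le_trans hmin' (by rw [hsplit]; exact add_le_add hhead htail2)
    have h6 := tsub_le_iff_right.2 h5
    rwa [ENNReal.sub_half hε_top] at h6
  have hK0 : K ≠ 0 := by
    refine mul_ne_zero ?_ (pow_ne_zero _ ?_)
    · simp only [ne_eq, ENNReal.ofReal_eq_zero, not_le]
      exact lt_of_lt_of_le one_pos hℓ1
    · exact fun hc0 => by simp [hc0] at hc1
  have hK_top : K ≠ ∞ :=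
    ENNReal.mul_ne_top ENNReal.ofReal_ne_top (ENNReal.pow_ne_top ENNReal.ofReal_ne_top)
  set δ : ℝ≥0∞ := ε / 2 / K with hδdef
  have hε2_0 : ε / 2 ≠ 0 := by
    simp only [ne_eq, ENNReal.div_eq_zero_iff, not_or]
    exact ⟨hε0, ENNReal.ofNat_ne_top⟩
  have hε2_top : ε / 2 ≠ ∞ := (ENNReal.div_lt_top hε_top two_ne_zero).ne
  have hδ0 : δ ≠ 0 := (ENNReal.div_pos hε2_0 hK_top).ne'
  have hδ_top : δ ≠ ∞ := (ENNReal.div_lt_top hε2_top hK0).ne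
  set d : ℝ := δ.toReal with hddef
  have hd0 : 0 < d := ENNReal.toReal_pos hδ0 hδ_top
  refine ⟨max 2 d⁻¹, lt_of_lt_of_le one_lt_two (le_max_left _ _), ?_⟩
  intro x hx
  have h6 : δ ≤ ENNReal.ofReal (V x)⁻¹ := by
    rw [hδdef, ENNReal.div_le_iff hK0 hK_top, mul_comm]
    exact claim x hx
  have h7 : d ≤ (V x)⁻¹ := by
    have h8 := ENNReal.toReal_mono ENNReal.ofReal_ne_top h6
    rwa [ENNReal.toReal_ofReal (inv_nonneg.2 (by linarith [ld.V_one_le x]))] at h8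
  have hVx : 0 < V x := lt_of_lt_of_le one_pos (ld.V_one_le x)
  have h8 : d * V x ≤ 1 := by
    calc d * V x ≤ (V x)⁻¹ * V x := mul_le_mul_of_nonneg_right h7 hVx.le
      _ = 1 := inv_mul_cancel₀ hVx.ne'
  have h9 : V x ≤ d⁻¹ := by
    rw [← one_div]
    exact (le_div_iff₀ hd0).2 (by rw [mul_comm]; exact h8)
  exact le_trans h9 (le_max_right _ _)
end

section
/- (Tail comparison gives a lower bound on f-variation convergence.) Let X be a Markov chain with transition kernel P and invariant probability measure π on a measurable space 𝒳. Let H, f, G : 𝒳 → [1,∞) be measurable with G = H/f and π(f) < ∞. Assume (a) there exists a : [1,∞) → (0,1] such that A(r) := r a(r) is increasing with lim_{r→∞} A(r) = ∞ and ∫_{{G ≥ r}} f(x) π(dx) ≥ a(r) for all r ≥ 1; and (b) there exists v : 𝒳 × ℕ → [1,∞), increasing in the second argument, with P^n H(x) ≤ v(x,n) for all x ∈ 𝒳 and n ∈ ℕ. Then for every n ∈ ℕ \ {0} and every x ∈ 𝒳: (1/2)·( a ∘ A^{-1} ∘ (2v) )(x,n) ≤ ‖π(·) − P^n(x,·)‖_f.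 -/
open MeasureTheory ProbabilityTheory Filter Set
open scoped ENNReal NNReal

/-- **Lemma (tail comparison gives a lower bound on `f`-variation convergence).**
Let `X` be a Markov chain with invariant probability measure `π` and `H, f, G ≥ 1`
measurable with `G = H/f` and `π(f) < ∞`. If (a) `a : [1,∞) → (0,1]` is such that
`A(r) = r a(r)` is increasing to infinity (with inverse `Ainv`) and
`∫_{{G ≥ r}} f dπ ≥ a(r)` for all `r ≥ 1`, and (b) `v` is increasing in the second
argument with `P^n H(x) ≤ v(x,n)`, then for every `n ≥ 1` and every `x`:
`(1/2)(a ∘ A⁻¹ ∘ 2v)(x,n) ≤ ‖π − P^n(x,·)‖_f`. -/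
theorem fVariation_tail_comparison_lower_bound
    {𝒳 : Type*} [MeasurableSpace 𝒳]
    (mc : MarkovChain 𝒳) (π : Measure 𝒳) [IsProbabilityMeasure π]
    (hπ_inv : π.bind (fun x => mc.P x) = π)
    (H f G : 𝒳 → ℝ) (H_meas : Measurable H) (f_meas : Measurable f)
    (G_meas : Measurable G)
    (H_one_le : ∀ x, 1 ≤ H x) (f_one_le : ∀ x, 1 ≤ f x) (G_one_le : ∀ x, 1 ≤ G x)
    (hG : ∀ x, G x = H x / f x) (hf_int : Integrable f π)
    (a : ℝ → ℝ) (ha_mem : ∀ r, 1 ≤ r → a r ∈ Set.Ioc (0 : ℝ) 1)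
    (hA_mono : StrictMonoOn (fun r => r * a r) (Set.Ici 1))
    (hA_tendsto : Tendsto (fun r => r * a r) atTop atTop)
    (Ainv : ℝ → ℝ) (hAinv_left : ∀ r, 1 ≤ r → Ainv (r * a r) = r)
    (hAinv_right : ∀ t, 1 * a 1 ≤ t → Ainv t * a (Ainv t) = t ∧ 1 ≤ Ainv t)
    (ha_tail : ∀ r, 1 ≤ r → a r ≤ ∫ x in {y | r ≤ G y}, f x ∂π)
    (v : 𝒳 → ℕ → ℝ) (hv_one_le : ∀ x n, 1 ≤ v x n) (hv_mono : ∀ x, Monotone (v x))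
    (hv : ∀ (x : 𝒳) (n : ℕ),
      ∫⁻ y, ENNReal.ofReal (H y) ∂(mc.stepDist x n) ≤ ENNReal.ofReal (v x n)) :
    ∀ (x : 𝒳) (n : ℕ), n ≠ 0 →
      a (Ainv (2 * v x n)) / 2 ≤ fVar f π (mc.stepDist x n) := by
  intro x n hn
  set ν := mc.stepDist x n with hν
  -- basic positivity facts
  have hH_nonneg : ∀ y, (0:ℝ) ≤ H y := fun y => le_trans zero_le_one (H_one_le y)
  have hf_nonneg : ∀ y, (0:ℝ) ≤ f y := fun y => le_trans zero_le_one (f_one_le y)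
  have hH_eq : ∀ y, H y = G y * f y := by
    intro y
    have hfne : f y ≠ 0 := ne_of_gt (lt_of_lt_of_le zero_lt_one (f_one_le y))
    have := (hG y).symm
    field_simp [hfne] at this
    linarith
  have hf_le_H : ∀ y, f y ≤ H y := by
    intro y
    have := hH_eq y
    nlinarith [G_one_le y, hf_nonneg y]
  -- integrability of H with respect to ν
  have hHlint : ∫⁻ y, ENNReal.ofReal (H y) ∂ν ≤ ENNReal.ofReal (v x n) := hv x n
  have hH_int : Integrable H ν := by
    refine ⟨H_meas.aestronglyMeasurable, ?_⟩
    rw [hasFiniteIntegral_iff_ofReal (Filter.Eventually.of_forall hH_nonneg)]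
    exact lt_of_le_of_lt hHlint ENNReal.ofReal_lt_top
  have hf_int_ν : Integrable f ν := by
    refine hH_int.mono f_meas.aestronglyMeasurable ?_
    refine Filter.Eventually.of_forall fun y => ?_
    rw [Real.norm_eq_abs, Real.norm_eq_abs, abs_of_nonneg (hf_nonneg y),
      abs_of_nonneg (hH_nonneg y)]
    exact hf_le_H y
  -- ∫ H dν ≤ v x n
  have hH_intgl : ∫ y, H y ∂ν ≤ v x n := by
    rw [integral_eq_lintegral_of_nonneg_ae (Filter.Eventually.of_forall hH_nonneg)
      H_meas.aestronglyMeasurable]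
    calc (∫⁻ y, ENNReal.ofReal (H y) ∂ν).toReal
        ≤ (ENNReal.ofReal (v x n)).toReal :=
          ENNReal.toReal_mono ENNReal.ofReal_ne_top hHlint
      _ = v x n := ENNReal.toReal_ofReal (le_trans zero_le_one (hv_one_le x n))
  -- ∫ f dν ≤ v x n
  have hf_intgl : ∫ y, f y ∂ν ≤ v x n :=
    le_trans (integral_mono hf_int_ν hH_int hf_le_H) hH_intgl
  -- define r
  have hv1 : (1:ℝ) ≤ v x n := hv_one_le x n
  have h2v : 1 * a 1 ≤ 2 * v x n := by
    have ha1 := (ha_mem 1 le_rfl).2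
    nlinarith
  obtain ⟨hrA, hr1⟩ := hAinv_right (2 * v x n) h2v
  set r := Ainv (2 * v x n) with hrdef
  have hr_pos : (0:ℝ) < r := lt_of_lt_of_le zero_lt_one hr1
  have har_pos : 0 < a r := (ha_mem r hr1).1
  -- the test function
  set S : Set 𝒳 := {y | r ≤ G y} with hSdef
  have hS : MeasurableSet S := measurableSet_le measurable_const G_meas
  set g : 𝒳 → ℝ := S.indicator f with hgdef
  have hg_meas : Measurable g := f_meas.indicator hS
  have hg_abs : ∀ y, |g y| ≤ f y := by
    intro y
    by_cases hy : y ∈ S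
    · rw [hgdef, Set.indicator_of_mem hy, abs_of_nonneg (hf_nonneg y)]
    · rw [hgdef, Set.indicator_of_notMem hy, abs_zero]; exact hf_nonneg y
  have hg_int_π : Integrable g π := by
    refine hf_int.mono hg_meas.aestronglyMeasurable ?_
    refine Filter.Eventually.of_forall fun y => ?_
    rw [Real.norm_eq_abs, Real.norm_eq_abs, abs_of_nonneg (hf_nonneg y)]
    exact hg_abs y
  have hg_int_ν : Integrable g ν := by
    refine hf_int_ν.mono hg_meas.aestronglyMeasurable ?_
    refine Filter.Eventually.of_forall fun y => ?_
    rw [Real.norm_eq_abs, Real.norm_eq_abs, abs_of_nonneg (hf_nonneg y)]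
    exact hg_abs y
  -- lower bound for ∫ g dπ
  have hgπ : a r ≤ ∫ y, g y ∂π := by
    rw [hgdef, integral_indicator hS]
    exact ha_tail r hr1
  -- upper bound for ∫ g dν
  have hgν : ∫ y, g y ∂ν ≤ a r / 2 := by
    have hle : ∀ y, g y ≤ H y / r := by
      intro y
      by_cases hy : y ∈ S
      · rw [hgdef, Set.indicator_of_mem hy, le_div_iff₀ hr_pos]
        have hyS : r ≤ G y := hy
        nlinarith [hH_eq y, hf_nonneg y]
      · rw [hgdef, Set.indicator_of_notMem hy]
        have := hH_nonneg y
        positivity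
    have h1 : ∫ y, g y ∂ν ≤ ∫ y, H y / r ∂ν :=
      integral_mono hg_int_ν (hH_int.div_const r) hle
    have h2 : ∫ y, H y / r ∂ν = (∫ y, H y ∂ν) / r := integral_div r H
    have h3 : (∫ y, H y ∂ν) / r ≤ v x n / r := by
      exact div_le_div_of_nonneg_right hH_intgl hr_pos.le
    have h4 : v x n / r = a r / 2 := by
      rw [div_eq_div_iff hr_pos.ne' two_ne_zero]
      linarith
    linarith [h1, h2 ▸ h1]
  -- bounded above: the range of the sup defining fVar
  have hbdd : BddAbove (Set.range fun g' : {g' : 𝒳 → ℝ // Measurable g' ∧ ∀ y, |g' y| ≤ f y} =>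
      |(∫ y, (g' : 𝒳 → ℝ) y ∂π) - ∫ y, (g' : 𝒳 → ℝ) y ∂ν|) := by
    refine ⟨(∫ y, f y ∂π) + v x n, ?_⟩
    rintro z ⟨⟨g', hm', hb'⟩, rfl⟩
    simp only
    have hg'_int_π : Integrable g' π := by
      refine hf_int.mono hm'.aestronglyMeasurable ?_
      refine Filter.Eventually.of_forall fun y => ?_
      rw [Real.norm_eq_abs, Real.norm_eq_abs, abs_of_nonneg (hf_nonneg y)]
      exact hb' y
    have hg'_int_ν : Integrable g' ν := by
      refine hf_int_ν.mono hm'.aestronglyMeasurable ?_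
      refine Filter.Eventually.of_forall fun y => ?_
      rw [Real.norm_eq_abs, Real.norm_eq_abs, abs_of_nonneg (hf_nonneg y)]
      exact hb' y
    have h5 : |∫ y, g' y ∂π| ≤ ∫ y, f y ∂π := by
      calc |∫ y, g' y ∂π| = ‖∫ y, g' y ∂π‖ := (Real.norm_eq_abs _).symm
        _ ≤ ∫ y, ‖g' y‖ ∂π := norm_integral_le_integral_norm _
        _ = ∫ y, |g' y| ∂π := by simp [Real.norm_eq_abs]
        _ ≤ ∫ y, f y ∂π := integral_mono hg'_int_π.abs hf_int hb'
    have h6 : |∫ y, g' y ∂ν| ≤ v x n := by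
      calc |∫ y, g' y ∂ν| = ‖∫ y, g' y ∂ν‖ := (Real.norm_eq_abs _).symm
        _ ≤ ∫ y, ‖g' y‖ ∂ν := norm_integral_le_integral_norm _
        _ = ∫ y, |g' y| ∂ν := by simp [Real.norm_eq_abs]
        _ ≤ ∫ y, f y ∂ν := integral_mono hg'_int_ν.abs hf_int_ν hb'
        _ ≤ v x n := hf_intgl
    calc |(∫ y, g' y ∂π) - ∫ y, g' y ∂ν| ≤ |∫ y, g' y ∂π| + |∫ y, g' y ∂ν| :=
          abs_sub _ _
      _ ≤ (∫ y, f y ∂π) + v x n := add_le_add h5 h6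
  -- conclude
  have hle_sup := le_ciSup hbdd ⟨g, hg_meas, hg_abs⟩
  refine le_trans ?_ hle_sup
  have : a r / 2 ≤ (∫ y, g y ∂π) - ∫ y, g y ∂ν := by linarith
  exact le_trans this (le_abs_self _)
end
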